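/- arXiv:2204.11453 — 5 statements merged into one kernel-verified Lean document; each statement's English description precedes it below -/
import Mathlib

section
/- Let V be a finite-dimensional real inner product space with orthonormal basis (u_1,...,u_d), and suppose V = V_1 ⊕ ... ⊕ V_r is an orthogonal direct sum with each u_i belonging to some V_{j(i)}. Fix positive reals α_1,...,α_s (s ≤ r) and define the quasi-norm |v| = max_{1≤j≤s} ‖π_j(v)‖^{α_j}, where π_j is the orthogonal projection onto V_j, and the quasi-distance d̃(v,w) = |v−w|; set d̃(v,W) = inf_{w∈W} d̃(v,w) for a subset W. Let W be an affine hyperplane with V_{s+1} ⊕ ... ⊕ V_r contained in W − W, cut out by an affine map φ_W with linear part l_W. Then for every v ∈ V, d̃(v,W) is comparable, up to multiplicative constants depending only on d and α, to min over indices i with l_W(u_i) ≠ 0 of |φ_W(v)/l_W(u_i)|^{α_{j(i)}}. -/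
/-- Comparison of the quasi-distance to an affine hyperplane with the
minimum of `|φ_W(v)/l_W(u i)| ^ α (j i)` over indices `i` with `l_W (u i) ≠ 0`.
The affine hyperplane is `W = {w | l w = t}` (affine map `φ_W(v) = l v - t`, linear
part `l`), and the hypothesis `V_{s+1} ⊕ ⋯ ⊕ V_r ⊆ W - W` is expressed by saying that
`l` vanishes on every vector killed by all the projections `π j` with `j < s`. -/
theorem quasi_distance_to_affine_hyperplane
    {V : Type*} [NormedAddCommGroup V] [InnerProductSpace ℝ V] [FiniteDimensional ℝ V]
    (d r s : ℕ) (hs : s ≤ r)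
    -- the orthogonal decomposition `V = V_1 ⊕ ⋯ ⊕ V_r` given by its projections
    (π : Fin r → (V →ₗ[ℝ] V))
    (hsum : ∀ v : V, ∑ j, π j v = v)
    (hproj : ∀ i j : Fin r, ∀ v : V, π i (π j v) = if i = j then π j v else 0)
    (horth : ∀ i j : Fin r, i ≠ j → ∀ v w : V, inner ℝ (π i v) (π j w) = (0 : ℝ))
    -- the orthonormal basis `(u_1, …, u_d)`, compatible with the decomposition
    (u : Fin d → V) (hu : Orthonormal ℝ u)
    (huspan : Submodule.span ℝ (Set.range u) = ⊤)
    (jmap : Fin d → Fin r) (hujmap : ∀ i : Fin d, π (jmap i) (u i) = u i)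
    -- the exponents `α_1, …, α_s > 0`
    (α : Fin r → ℝ) (hα : ∀ j : Fin r, 0 < α j) :
    ∃ c C : ℝ, 0 < c ∧ 0 < C ∧
      ∀ (l : V →ₗ[ℝ] ℝ) (t : ℝ), l ≠ 0 →
        (∀ v : V, (∀ j : Fin r, (j : ℕ) < s → π j v = 0) → l v = 0) →
        ∀ v : V,
          c * (⨅ i : {i : Fin d // l (u i) ≠ 0}, |(l v - t) / l (u (i : Fin d))| ^ α (jmap i)) ≤
              (⨅ w : {w : V // l w = t},
                ⨆ j : {j : Fin r // (j : ℕ) < s}, ‖π j (v - (w : V))‖ ^ α j) ∧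
            (⨅ w : {w : V // l w = t},
                ⨆ j : {j : Fin r // (j : ℕ) < s}, ‖π j (v - (w : V))‖ ^ α j) ≤
              C * (⨅ i : {i : Fin d // l (u i) ≠ 0},
                |(l v - t) / l (u (i : Fin d))| ^ α (jmap i)) := by
  classical
  set g : Fin r → ℝ := fun j => min 1 ((d + 1 : ℝ) ^ (-(α j))) with hg
  have hgpos : ∀ j, 0 < g j := fun j =>
    lt_min one_pos (Real.rpow_pos_of_pos (by positivity) _)
  refine ⟨∏ j, g j, 1, Finset.prod_pos (fun j _ => hgpos j), one_pos, ?_⟩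
  intro l t hl hker v
  -- basic facts
  have hnu : ∀ i, ‖u i‖ = 1 := hu.1
  have hπu : ∀ (j : Fin r) (i : Fin d), π j (u i) = if j = jmap i then u i else 0 := by
    intro j i
    have := hproj j (jmap i) (u i)
    rwa [hujmap] at this
  -- some index with `l (u i) ≠ 0`
  have hexi : ∃ i, l (u i) ≠ 0 := by
    by_contra h
    push_neg at h
    exact hl (LinearMap.ext_on huspan (by rintro x ⟨i, rfl⟩; simpa using h i))
  have : Nonempty {i : Fin d // l (u i) ≠ 0} := ⟨⟨hexi.choose, hexi.choose_spec⟩⟩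
  -- `s ≥ 1`
  have hs1 : 1 ≤ s := by
    by_contra h
    push_neg at h
    interval_cases s
    exact hl (LinearMap.ext fun x => hker x (fun j hj => absurd hj (by omega)))
  have : Nonempty {j : Fin r // (j : ℕ) < s} :=
    ⟨⟨⟨0, lt_of_lt_of_le hs1 hs⟩, hs1⟩⟩
  -- `l (u i) ≠ 0 → jmap i < s`
  have hjs : ∀ i : Fin d, l (u i) ≠ 0 → ((jmap i : ℕ) < s) := by
    intro i hi
    by_contra h
    push_neg at h
    refine hi (hker (u i) ?_)
    intro j hj
    rw [hπu, if_neg]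
    rintro rfl
    omega
  -- hyperplane is nonempty
  obtain ⟨v₀, hv₀⟩ := hexi
  have : Nonempty {w : V // l w = t} := by
    refine ⟨⟨(t / l (u v₀)) • u v₀, ?_⟩⟩
    rw [map_smul, smul_eq_mul, div_mul_cancel₀ _ hv₀]
  -- orthonormal basis expansion
  let b : OrthonormalBasis (Fin d) ℝ V := OrthonormalBasis.mk hu (le_of_eq huspan.symm)
  have hb : ∀ x : V, ∑ i, (inner ℝ (u i) x : ℝ) • u i = x := by
    intro x
    have := b.sum_repr' x
    simpa [b, OrthonormalBasis.coe_mk] using this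
  have hlx : ∀ x : V, l x = ∑ i, (inner ℝ (u i) x : ℝ) * l (u i) := by
    intro x
    conv_lhs => rw [← hb x]
    rw [map_sum]
    simp [smul_eq_mul]
  -- inner product bound
  have hinner : ∀ (x : V) (i : Fin d), |(inner ℝ (u i) x : ℝ)| ≤ ‖π (jmap i) x‖ := by
    intro x i
    have h1 : (inner ℝ (u i) x : ℝ) = inner ℝ (u i) (π (jmap i) x) := by
      conv_lhs => rw [← hsum x]
      rw [inner_sum]
      refine Finset.sum_eq_single (jmap i) ?_ (by simp)
      intro k _ hk
      calc (inner ℝ (u i) (π k x) : ℝ) = inner ℝ (π (jmap i) (u i)) (π k x) := by rw [hujmap]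
        _ = 0 := horth _ _ (Ne.symm hk) _ _
    rw [h1]
    calc |(inner ℝ (u i) (π (jmap i) x) : ℝ)| ≤ ‖u i‖ * ‖π (jmap i) x‖ :=
          abs_real_inner_le_norm _ _
      _ = ‖π (jmap i) x‖ := by rw [hnu, one_mul]
  -- nonnegativity / boundedness facts
  have hInfBdd : BddBelow (Set.range fun i : {i : Fin d // l (u i) ≠ 0} =>
      |(l v - t) / l (u (i : Fin d))| ^ α (jmap i)) := by
    refine ⟨0, ?_⟩
    rintro y ⟨i, rfl⟩
    exact Real.rpow_nonneg (abs_nonneg _) _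
  have hsupnonneg : ∀ w : {w : V // l w = t},
      0 ≤ ⨆ j : {j : Fin r // (j : ℕ) < s}, ‖π j (v - (w : V))‖ ^ α j :=
    fun w => Real.iSup_nonneg (fun j => Real.rpow_nonneg (norm_nonneg _) _)
  have hWInfBdd : BddBelow (Set.range fun w : {w : V // l w = t} =>
      ⨆ j : {j : Fin r // (j : ℕ) < s}, ‖π j (v - (w : V))‖ ^ α j) := by
    refine ⟨0, ?_⟩
    rintro y ⟨w, rfl⟩
    exact hsupnonneg w
  constructor
  · -- lower bound
    refine le_ciInf ?_
    rintro ⟨w, hw⟩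
    set x := v - w with hx
    have hφ : l v - t = l x := by rw [hx, map_sub, hw]
    set S : Finset (Fin d) := Finset.univ.filter (fun i => l (u i) ≠ 0) with hSdef
    have hSne : S.Nonempty := ⟨v₀, by simp [hSdef, hv₀]⟩
    obtain ⟨i₀, hi₀S, hmax⟩ := S.exists_max_image
      (fun i => |(inner ℝ (u i) x : ℝ)| * |l (u i)|) hSne
    have hi₀ : l (u i₀) ≠ 0 := by simpa [hSdef] using hi₀S
    have hlux : |l x| ≤ (d : ℝ) * (|(inner ℝ (u i₀) x : ℝ)| * |l (u i₀)|) := by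
      have h1 : l x = ∑ i ∈ S, (inner ℝ (u i) x : ℝ) * l (u i) := by
        rw [hlx x]
        refine (Finset.sum_subset (Finset.subset_univ S) ?_).symm
        intro i _ hi
        have : l (u i) = 0 := by
          by_contra h; exact hi (by simp [hSdef, h])
        simp [this]
      calc |l x| ≤ ∑ i ∈ S, |(inner ℝ (u i) x : ℝ) * l (u i)| := by
            rw [h1]; exact Finset.abs_sum_le_sum_abs _ _
        _ = ∑ i ∈ S, |(inner ℝ (u i) x : ℝ)| * |l (u i)| := by
            simp [abs_mul]
        _ ≤ S.card • (|(inner ℝ (u i₀) x : ℝ)| * |l (u i₀)|) :=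
            Finset.sum_le_card_nsmul _ _ _ hmax
        _ ≤ (d : ℝ) * (|(inner ℝ (u i₀) x : ℝ)| * |l (u i₀)|) := by
            rw [nsmul_eq_mul]
            refine mul_le_mul_of_nonneg_right ?_ (by positivity)
            exact_mod_cast le_trans (Finset.card_le_univ S) (by simp)
    set j₀ : Fin r := jmap i₀ with hj₀
    have hj₀s : (j₀ : ℕ) < s := hjs i₀ hi₀
    -- key pointwise inequality
    have hkey : |(l v - t) / l (u i₀)| ≤ (d + 1 : ℝ) * ‖π j₀ x‖ := by
      rw [hφ, abs_div]
      rw [div_le_iff₀ (abs_pos.mpr hi₀)]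
      calc |l x| ≤ (d : ℝ) * (|(inner ℝ (u i₀) x : ℝ)| * |l (u i₀)|) := hlux
        _ ≤ (d + 1 : ℝ) * (‖π j₀ x‖ * |l (u i₀)|) := by
            refine mul_le_mul (by linarith) ?_ (by positivity) (by positivity)
            exact mul_le_mul_of_nonneg_right (hinner x i₀) (abs_nonneg _)
        _ = (d + 1 : ℝ) * ‖π j₀ x‖ * |l (u i₀)| := by ring
    have hrpow : |(l v - t) / l (u i₀)| ^ α j₀ ≤
        ((d + 1 : ℝ) ^ α j₀) * ‖π j₀ x‖ ^ α j₀ := by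
      calc |(l v - t) / l (u i₀)| ^ α j₀
          ≤ ((d + 1 : ℝ) * ‖π j₀ x‖) ^ α j₀ :=
            Real.rpow_le_rpow (abs_nonneg _) hkey (le_of_lt (hα j₀))
        _ = ((d + 1 : ℝ) ^ α j₀) * ‖π j₀ x‖ ^ α j₀ :=
            Real.mul_rpow (by positivity) (norm_nonneg _)
    have hcle : (∏ j, g j) ≤ (d + 1 : ℝ) ^ (-(α j₀)) := by
      calc (∏ j, g j) = g j₀ * ∏ j ∈ Finset.univ.erase j₀, g j :=
            (Finset.mul_prod_erase _ _ (Finset.mem_univ j₀)).symm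
        _ ≤ g j₀ * 1 := by
            refine mul_le_mul_of_nonneg_left ?_ (le_of_lt (hgpos j₀))
            exact Finset.prod_le_one (fun j _ => le_of_lt (hgpos j)) (fun j _ => min_le_left _ _)
        _ = g j₀ := mul_one _
        _ ≤ (d + 1 : ℝ) ^ (-(α j₀)) := min_le_right _ _
    have hchain : (∏ j, g j) * (|(l v - t) / l (u i₀)| ^ α j₀) ≤ ‖π j₀ x‖ ^ α j₀ := by
      calc (∏ j, g j) * (|(l v - t) / l (u i₀)| ^ α j₀)
          ≤ ((d + 1 : ℝ) ^ (-(α j₀))) * (((d + 1 : ℝ) ^ α j₀) * ‖π j₀ x‖ ^ α j₀) := by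
            refine mul_le_mul hcle hrpow (Real.rpow_nonneg (abs_nonneg _) _)
              (Real.rpow_nonneg (by positivity) _)
        _ = (((d + 1 : ℝ) ^ (-(α j₀))) * ((d + 1 : ℝ) ^ α j₀)) * ‖π j₀ x‖ ^ α j₀ := by ring
        _ = ‖π j₀ x‖ ^ α j₀ := by
            rw [← Real.rpow_add (by positivity), neg_add_cancel, Real.rpow_zero, one_mul]
    have hsupge : ‖π j₀ x‖ ^ α j₀ ≤
        ⨆ j : {j : Fin r // (j : ℕ) < s}, ‖π j (v - w)‖ ^ α j := by
      have hbdd : BddAbove (Set.range fun j : {j : Fin r // (j : ℕ) < s} =>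
          ‖π j (v - w)‖ ^ α j) := (Set.finite_range _).bddAbove
      exact le_ciSup hbdd ⟨j₀, hj₀s⟩
    calc (∏ j, g j) *
        (⨅ i : {i : Fin d // l (u i) ≠ 0}, |(l v - t) / l (u (i : Fin d))| ^ α (jmap i))
        ≤ (∏ j, g j) * (|(l v - t) / l (u i₀)| ^ α j₀) := by
          refine mul_le_mul_of_nonneg_left ?_ (le_of_lt (Finset.prod_pos (fun j _ => hgpos j)))
          exact ciInf_le hInfBdd ⟨i₀, hi₀⟩
      _ ≤ ‖π j₀ x‖ ^ α j₀ := hchain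
      _ ≤ _ := hsupge
  · -- upper bound, with C = 1
    rw [one_mul]
    refine le_ciInf ?_
    rintro ⟨i, hi⟩
    set a : ℝ := (l v - t) / l (u i) with ha
    have hw : l (v - a • u i) = t := by
      rw [map_sub, map_smul, smul_eq_mul, ha, div_mul_cancel₀ _ hi]
      ring
    refine le_trans (ciInf_le hWInfBdd ⟨v - a • u i, hw⟩) ?_
    refine ciSup_le ?_
    rintro ⟨j, hj⟩
    have hvw : v - (v - a • u i) = a • u i := by abel
    rw [hvw, map_smul, hπu]
    by_cases hji : j = jmap i
    · subst hji
      rw [if_pos rfl, norm_smul, hnu, mul_one, Real.norm_eq_abs]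
    · rw [if_neg hji, smul_zero, norm_zero,
        Real.zero_rpow (ne_of_gt (hα j))]
      exact Real.rpow_nonneg (abs_nonneg _) _
end

section
/- Let E be a real associative algebra and η a finite Borel measure on E with η(E) ≤ 1. Set μ = η*η*η ⊟ η*η*η (difference of two independent triple multiplicative convolutions). Then for every integer m ≥ 1 and every linear functional ξ on E, |(η^{*3m})^∧(ξ)|^{2^m} ≤ |(μ^{*m})^∧(ξ)|, where η^{*k} and μ^{*m} denote k-fold and m-fold multiplicative convolution powers. -/
open MeasureTheory

/-- Multiplicative convolution: image of `μ ⊗ ν` under `(x, y) ↦ x * y`. -/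
noncomputable def mulConv {E : Type*} [Mul E] [MeasurableSpace E]
    (μ ν : Measure E) : Measure E :=
  Measure.map (fun p : E × E => p.1 * p.2) (μ.prod ν)

/-- Difference convolution: image of `μ ⊗ ν` under `(x, y) ↦ x - y`. -/
noncomputable def subConv {E : Type*} [Sub E] [MeasurableSpace E]
    (μ ν : Measure E) : Measure E :=
  Measure.map (fun p : E × E => p.1 - p.2) (μ.prod ν)

/-- `k`-fold multiplicative convolution power (`μ^{*0}` is the Dirac mass at `1`). -/
noncomputable def mulConvPow {E : Type*} [Monoid E] [MeasurableSpace E]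
    (μ : Measure E) : ℕ → Measure E
  | 0 => Measure.dirac 1
  | k + 1 => mulConv (mulConvPow μ k) μ

/-- Fourier transform of a finite measure on `E` at a linear functional `ξ`. -/
noncomputable def fourierAt {E : Type*} [AddCommGroup E] [Module ℝ E] [MeasurableSpace E]
    (μ : Measure E) (ξ : E →ₗ[ℝ] ℝ) : ℂ :=
  ∫ x, Complex.exp (2 * Real.pi * Complex.I * (ξ x : ℂ)) ∂μ

section Generic
variable {X : Type*} [MeasurableSpace X] {F : Type*} [NormedAddCommGroup F]

lemma integrable_of_bound {ρ : Measure X} [IsFiniteMeasure ρ] {f : X → F}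
    (hm : AEStronglyMeasurable f ρ) (C : ℝ) (h : ∀ x, ‖f x‖ ≤ C) : Integrable f ρ :=
  (integrable_const C).mono' hm (Filter.Eventually.of_forall h)

/-- Cauchy–Schwarz: for a (sub)probability measure, `(∫ f)² ≤ ∫ f²` for bounded nonneg `f`. -/
lemma sq_integral_le {ρ : Measure X} [IsFiniteMeasure ρ] (hρ : ρ Set.univ ≤ 1)
    {f : X → ℝ} (hm : AEStronglyMeasurable f ρ) (h0 : ∀ x, 0 ≤ f x) (C : ℝ)
    (hC : ∀ x, f x ≤ C) : (∫ x, f x ∂ρ) ^ 2 ≤ ∫ x, f x ^ 2 ∂ρ := by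
  have hCnn : ∀ x, ‖f x‖ ≤ C := fun x => by
    rw [Real.norm_of_nonneg (h0 x)]; exact hC x
  have hmem : MemLp f (ENNReal.ofReal 2) ρ := MemLp.of_bound hm C (Filter.Eventually.of_forall hCnn)
  have hone : MemLp (fun _ : X => (1 : ℝ)) (ENNReal.ofReal 2) ρ := memLp_const 1
  have hconj : Real.HolderConjugate 2 2 := Real.HolderConjugate.two_two
  have H := integral_mul_le_Lp_mul_Lq_of_nonneg hconj (μ := ρ)
      (Filter.Eventually.of_forall h0) (Filter.Eventually.of_forall fun _ => zero_le_one)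
      hmem hone
  simp only [mul_one, one_pow] at H
  have h1 : ∫ _x, (1 : ℝ) ^ (2 : ℝ) ∂ρ = (ρ Set.univ).toReal := by
    simp [Real.one_rpow, Measure.real]
  have hmass : (ρ Set.univ).toReal ≤ 1 := by
    refine ENNReal.toReal_le_of_le_ofReal zero_le_one ?_
    simpa using hρ
  have h2 : ((ρ Set.univ).toReal) ^ ((1:ℝ) / 2) ≤ 1 :=
    Real.rpow_le_one ENNReal.toReal_nonneg hmass (by norm_num)
  have hrw : ∀ x, f x ^ (2 : ℝ) = f x ^ 2 := fun x => by
    rw [show (2:ℝ) = ((2:ℕ):ℝ) by norm_num, Real.rpow_natCast]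
  rw [h1] at H
  have hA : 0 ≤ ∫ x, f x ^ 2 ∂ρ := integral_nonneg fun x => sq_nonneg _
  have H2 : ∫ x, f x ∂ρ ≤ (∫ x, f x ^ 2 ∂ρ) ^ ((1:ℝ)/2) := by
    calc ∫ x, f x ∂ρ ≤ (∫ x, f x ^ (2:ℝ) ∂ρ) ^ ((1:ℝ)/2) * ((ρ Set.univ).toReal) ^ ((1:ℝ)/2) := H
    _ ≤ (∫ x, f x ^ (2:ℝ) ∂ρ) ^ ((1:ℝ)/2) * 1 := by
        refine mul_le_mul_of_nonneg_left h2 (Real.rpow_nonneg ?_ _)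
        exact integral_nonneg fun x => Real.rpow_nonneg (h0 x) _
    _ = (∫ x, f x ^ 2 ∂ρ) ^ ((1:ℝ)/2) := by rw [mul_one]; congr 1; exact integral_congr_ae (Filter.Eventually.of_forall fun x => hrw x)
  calc (∫ x, f x ∂ρ) ^ 2 ≤ ((∫ x, f x ^ 2 ∂ρ) ^ ((1:ℝ)/2)) ^ 2 := by
        exact pow_le_pow_left₀ (integral_nonneg h0) H2 2
  _ = ∫ x, f x ^ 2 ∂ρ := by
        rw [← Real.rpow_natCast ((∫ x, f x ^ 2 ∂ρ) ^ ((1:ℝ)/2)) 2, ← Real.rpow_mul hA]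
        norm_num

end Generic

section CharM
variable {E : Type*} [NormedRing E] [NormedAlgebra ℝ E] [FiniteDimensional ℝ E]
  [MeasurableSpace E] [BorelSpace E]

noncomputable def char (ξ : E →ₗ[ℝ] ℝ) (x : E) : ℂ :=
  Complex.exp (2 * Real.pi * Complex.I * (ξ x : ℂ))

lemma char_continuous (ξ : E →ₗ[ℝ] ℝ) : Continuous (char ξ) :=
  Complex.continuous_exp.comp
    (continuous_const.mul (Complex.continuous_ofReal.comp ξ.continuous_of_finiteDimensional))

lemma norm_char (ξ : E →ₗ[ℝ] ℝ) (x : E) : ‖char ξ x‖ = 1 := by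
  rw [char, Complex.norm_exp]
  have : (2 * ↑Real.pi * Complex.I * ((ξ x : ℝ) : ℂ)).re = 0 := by
    simp [Complex.mul_re, Complex.mul_im]
  rw [this, Real.exp_zero]

lemma char_sub (ξ : E →ₗ[ℝ] ℝ) (a b : E) :
    char ξ (a - b) = char ξ a * (starRingEnd ℂ) (char ξ b) := by
  have h1 : (starRingEnd ℂ) (char ξ b) = Complex.exp (-(2 * Real.pi * Complex.I * (ξ b : ℂ))) := by
    rw [char, ← Complex.exp_conj]
    congr 1
    simp only [map_mul, Complex.conj_I, Complex.conj_ofReal, map_ofNat]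
    ring
  rw [char, h1, char, ← Complex.exp_add, map_sub]
  congr 1
  push_cast
  ring

end CharM
section MeasAlg
variable {E : Type*} [NormedRing E] [NormedAlgebra ℝ E] [FiniteDimensional ℝ E]
  [MeasurableSpace E] [BorelSpace E]

lemma measurable_mul2 : Measurable fun p : E × E => p.1 * p.2 := measurable_mul
lemma measurable_sub2 : Measurable fun p : E × E => p.1 - p.2 := measurable_sub

lemma mulConv_univ (μ ν : Measure E) [SFinite μ] [SFinite ν] :
    mulConv μ ν Set.univ = μ Set.univ * ν Set.univ := by
  rw [mulConv, Measure.map_apply measurable_mul2 MeasurableSet.univ, Set.preimage_univ,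
    ← Set.univ_prod_univ, Measure.prod_prod]

lemma subConv_univ (μ ν : Measure E) [SFinite μ] [SFinite ν] :
    subConv μ ν Set.univ = μ Set.univ * ν Set.univ := by
  rw [subConv, Measure.map_apply measurable_sub2 MeasurableSet.univ, Set.preimage_univ,
    ← Set.univ_prod_univ, Measure.prod_prod]

instance (μ ν : Measure E) [IsFiniteMeasure μ] [IsFiniteMeasure ν] :
    IsFiniteMeasure (mulConv μ ν) :=
  ⟨by rw [mulConv_univ]; exact ENNReal.mul_lt_top (measure_lt_top _ _) (measure_lt_top _ _)⟩

instance (μ ν : Measure E) [IsFiniteMeasure μ] [IsFiniteMeasure ν] :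
    IsFiniteMeasure (subConv μ ν) :=
  ⟨by rw [subConv_univ]; exact ENNReal.mul_lt_top (measure_lt_top _ _) (measure_lt_top _ _)⟩

instance (μ : Measure E) [IsFiniteMeasure μ] (n : ℕ) : IsFiniteMeasure (mulConvPow μ n) := by
  induction n with
  | zero => rw [mulConvPow]; infer_instance
  | succ k ih => rw [mulConvPow]; infer_instance

lemma mulConvPow_univ_le (μ : Measure E) [IsFiniteMeasure μ] (hμ : μ Set.univ ≤ 1) (n : ℕ) :
    mulConvPow μ n Set.univ ≤ 1 := by
  induction n with
  | zero => simp [mulConvPow]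
  | succ k ih =>
      rw [mulConvPow, mulConv_univ]
      calc mulConvPow μ k Set.univ * μ Set.univ ≤ 1 * 1 := mul_le_mul' ih hμ
      _ = 1 := one_mul 1

lemma mulConv_dirac_one (μ : Measure E) [SFinite μ] : mulConv μ (Measure.dirac 1) = μ :=
  Measure.mconv_dirac_one μ

lemma dirac_one_mulConv (μ : Measure E) [SFinite μ] : mulConv (Measure.dirac 1) μ = μ :=
  Measure.dirac_one_mconv μ

lemma mulConv_assoc (α β γ : Measure E) [SFinite α] [SFinite β] [SFinite γ] :
    mulConv (mulConv α β) γ = mulConv α (mulConv β γ) := by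
  have hm : Measurable fun p : E × E => p.1 * p.2 := measurable_mul
  have h1 : (mulConv α β).prod γ
      = Measure.map (Prod.map (fun p : E × E => p.1 * p.2) id) ((α.prod β).prod γ) := by
    have h := Measure.map_prod_map (α.prod β) γ hm measurable_id
    rw [Measure.map_id] at h
    exact h
  have h3 : α.prod (mulConv β γ)
      = Measure.map (Prod.map (id : E → E) (fun p : E × E => p.1 * p.2)) (α.prod (β.prod γ)) := by
    have h := Measure.map_prod_map α (β.prod γ) measurable_id hm
    rw [Measure.map_id] at h
    exact h
  have hL : mulConv (mulConv α β) γ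
      = Measure.map ((fun p : E × E => p.1 * p.2) ∘ Prod.map (fun p : E × E => p.1 * p.2) id)
          ((α.prod β).prod γ) := by
    rw [mulConv, h1, Measure.map_map hm (hm.prodMap measurable_id)]
  have hR : mulConv α (mulConv β γ)
      = Measure.map (((fun p : E × E => p.1 * p.2) ∘ Prod.map id (fun p : E × E => p.1 * p.2))
          ∘ MeasurableEquiv.prodAssoc) ((α.prod β).prod γ) := by
    rw [mulConv, h3, Measure.map_map hm (measurable_id.prodMap hm), ← Measure.prodAssoc_prod,
      Measure.map_map (hm.comp (measurable_id.prodMap hm)) MeasurableEquiv.prodAssoc.measurable]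
  rw [hL, hR]
  congr 1
  funext p
  obtain ⟨⟨x, y⟩, z⟩ := p
  simp [MeasurableEquiv.prodAssoc, mul_assoc]

lemma mulConvPow_add (μ : Measure E) [IsFiniteMeasure μ] (a b : ℕ) :
    mulConvPow μ (a + b) = mulConv (mulConvPow μ a) (mulConvPow μ b) := by
  induction b with
  | zero => rw [mulConvPow, Nat.add_zero, mulConv_dirac_one]
  | succ k ih =>
      rw [show a + (k+1) = (a+k)+1 from rfl, mulConvPow, ih, mulConvPow, mulConv_assoc]

end MeasAlg
section Key
variable {E : Type*} [NormedRing E] [NormedAlgebra ℝ E] [FiniteDimensional ℝ E]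
  [MeasurableSpace E] [BorelSpace E]

lemma norm_integral_le_mass {Y : Type*} [MeasurableSpace Y] (ρ : Measure Y) [IsFiniteMeasure ρ]
    (f : Y → ℂ) (h : ∀ y, ‖f y‖ ≤ 1) : ‖∫ y, f y ∂ρ‖ ≤ (ρ Set.univ).toReal := by
  calc ‖∫ y, f y ∂ρ‖ ≤ ∫ y, ‖f y‖ ∂ρ := norm_integral_le_integral_norm _
  _ ≤ ∫ _y, (1 : ℝ) ∂ρ := by
      refine integral_mono_of_nonneg (Filter.Eventually.of_forall fun y => norm_nonneg _)
        (integrable_const 1) (Filter.Eventually.of_forall h)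
  _ = (ρ Set.univ).toReal := by simp [Measure.real]

lemma mul_conj_norm (z : ℂ) : z * (starRingEnd ℂ) z = ((‖z‖ ^ 2 : ℝ) : ℂ) := by
  simp [Complex.mul_conj]; norm_cast; simp [Complex.sq_norm]

lemma fourierAt_triple (α β γ : Measure E) [IsFiniteMeasure α] [IsFiniteMeasure β]
    [IsFiniteMeasure γ] (ξ : E →ₗ[ℝ] ℝ) :
    fourierAt (mulConv (mulConv α β) γ) ξ
      = ∫ x, ∫ y, ∫ z, char ξ (x * y * z) ∂γ ∂β ∂α := by
  have hm : Measurable fun p : E × E => p.1 * p.2 := measurable_mul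
  have hc : Continuous (char ξ) := char_continuous ξ
  have hsm3 : AEStronglyMeasurable (fun q : (E × E) × E => char ξ (q.1.1 * q.1.2 * q.2))
      ((α.prod β).prod γ) := (hc.comp (by fun_prop)).aestronglyMeasurable
  have hint3 : Integrable (fun q : (E × E) × E => char ξ (q.1.1 * q.1.2 * q.2))
      ((α.prod β).prod γ) := integrable_of_bound hsm3 1 fun q => le_of_eq (norm_char ξ _)
  have hsm2 : StronglyMeasurable fun q : (E × E) × E => char ξ (q.1.1 * q.1.2 * q.2) :=
    (hc.comp (by fun_prop : Continuous fun q : (E × E) × E => q.1.1 * q.1.2 * q.2)).stronglyMeasurable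
  have hint2 : Integrable (fun a : E × E => ∫ z, char ξ (a.1 * a.2 * z) ∂γ) (α.prod β) := by
    refine integrable_of_bound (hsm2.integral_prod_right'.aestronglyMeasurable) ((γ Set.univ).toReal)
      fun a => norm_integral_le_mass γ _ fun z => le_of_eq (norm_char ξ _)
  have hprod : (mulConv α β).prod γ
      = Measure.map (Prod.map (fun p : E × E => p.1 * p.2) id) ((α.prod β).prod γ) := by
    have h := Measure.map_prod_map (α.prod β) γ hm measurable_id
    rw [Measure.map_id] at h
    exact h
  calc fourierAt (mulConv (mulConv α β) γ) ξ
      = ∫ p : E × E, char ξ (p.1 * p.2) ∂((mulConv α β).prod γ) :=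
        integral_map hm.aemeasurable hc.aestronglyMeasurable
    _ = ∫ q : (E × E) × E, char ξ (q.1.1 * q.1.2 * q.2) ∂((α.prod β).prod γ) := by
        rw [hprod]
        exact integral_map (hm.prodMap measurable_id).aemeasurable
          ((hc.comp continuous_mul).aestronglyMeasurable)
    _ = ∫ a : E × E, ∫ z, char ξ (a.1 * a.2 * z) ∂γ ∂(α.prod β) := integral_prod _ hint3
    _ = ∫ x, ∫ y, ∫ z, char ξ (x * y * z) ∂γ ∂β ∂α := integral_prod _ hint2

end Key
section Key2
variable {E : Type*} [NormedRing E] [NormedAlgebra ℝ E] [FiniteDimensional ℝ E]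
  [MeasurableSpace E] [BorelSpace E]

lemma key_ineq (α β γ : Measure E) [IsFiniteMeasure α] [IsFiniteMeasure β] [IsFiniteMeasure γ]
    (hα : α Set.univ ≤ 1) (hγ : γ Set.univ ≤ 1) (ξ : E →ₗ[ℝ] ℝ) :
    ‖fourierAt (mulConv (mulConv α β) γ) ξ‖ ^ 2 ≤
      ‖fourierAt (mulConv (mulConv α (subConv β β)) γ) ξ‖ := by
  have hc : Continuous (char ξ) := char_continuous ξ
  have hn : ∀ x : E, ‖char ξ x‖ = 1 := norm_char ξ
  set h : E → E → ℂ := fun x z => ∫ y, char ξ (x * y * z) ∂β with hh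
  set B : ℝ := (β Set.univ).toReal with hB
  have hBnn : 0 ≤ B := ENNReal.toReal_nonneg
  -- strong measurability of h as a function of the pair
  have hsm3 : StronglyMeasurable fun q : (E × E) × E => char ξ (q.1.1 * q.2 * q.1.2) :=
    (hc.comp (by fun_prop : Continuous fun q : (E × E) × E => q.1.1 * q.2 * q.1.2)).stronglyMeasurable
  have hsmh : StronglyMeasurable fun q : E × E => h q.1 q.2 := hsm3.integral_prod_right'
  have hbh : ∀ x z : E, ‖h x z‖ ≤ B := fun x z =>
    norm_integral_le_mass β _ fun y => le_of_eq (hn _)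
  -- Step A : representation of F
  have hF : fourierAt (mulConv (mulConv α β) γ) ξ = ∫ x, ∫ z, h x z ∂γ ∂α := by
    rw [fourierAt_triple α β γ ξ]
    refine integral_congr_ae (Filter.Eventually.of_forall fun x => ?_)
    have hint : Integrable (Function.uncurry fun y z => char ξ (x * y * z)) (β.prod γ) :=
      integrable_of_bound ((hc.comp
        (by fun_prop : Continuous fun p : E × E => x * p.1 * p.2)).aestronglyMeasurable) 1
        fun p => le_of_eq (hn _)
    exact integral_integral_swap hint
  -- inner integral against subConv β β
  have hsub_inner : ∀ x z : E,
      ∫ w, char ξ (x * w * z) ∂(subConv β β) = ((‖h x z‖ ^ 2 : ℝ) : ℂ) := by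
    intro x z
    have e1 : ∫ w, char ξ (x * w * z) ∂(subConv β β)
        = ∫ p : E × E, char ξ (x * (p.1 - p.2) * z) ∂(β.prod β) :=
      integral_map measurable_sub2.aemeasurable
        ((hc.comp (by fun_prop : Continuous fun w : E => x * w * z)).aestronglyMeasurable)
    have e2 : ∀ p : E × E, char ξ (x * (p.1 - p.2) * z)
        = char ξ (x * p.1 * z) * (starRingEnd ℂ) (char ξ (x * p.2 * z)) := by
      intro p
      rw [show x * (p.1 - p.2) * z = x * p.1 * z - x * p.2 * z by rw [mul_sub, sub_mul],
        char_sub]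
    have hint : Integrable
        (fun p : E × E => char ξ (x * p.1 * z) * (starRingEnd ℂ) (char ξ (x * p.2 * z)))
        (β.prod β) := by
      refine integrable_of_bound ?_ 1 fun p => ?_
      · exact ((hc.comp (by fun_prop : Continuous fun p : E × E => x * p.1 * z)).mul
          (Complex.continuous_conj.comp
            (hc.comp (by fun_prop : Continuous fun p : E × E => x * p.2 * z)))).aestronglyMeasurable
      · rw [norm_mul, RCLike.norm_conj, hn, hn, mul_one]
    rw [e1]
    simp only [e2]
    rw [integral_prod _ hint]
    have e3 : ∀ y : E, ∫ y' : E, char ξ (x * y * z) * (starRingEnd ℂ) (char ξ (x * y' * z)) ∂β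
        = char ξ (x * y * z) * (starRingEnd ℂ) (h x z) := by
      intro y
      rw [integral_const_mul, ← integral_conj]
    simp only [e3]
    rw [integral_mul_const, mul_conj_norm]
  -- Step B : representation of G
  have hG : fourierAt (mulConv (mulConv α (subConv β β)) γ) ξ
      = ((∫ x, ∫ z, ‖h x z‖ ^ 2 ∂γ ∂α : ℝ) : ℂ) := by
    rw [fourierAt_triple α (subConv β β) γ ξ]
    have step : ∀ x : E, ∫ w, ∫ z, char ξ (x * w * z) ∂γ ∂(subConv β β)
        = ((∫ z, ‖h x z‖ ^ 2 ∂γ : ℝ) : ℂ) := by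
      intro x
      have hint : Integrable (Function.uncurry fun w z => char ξ (x * w * z))
          ((subConv β β).prod γ) :=
        integrable_of_bound ((hc.comp
          (by fun_prop : Continuous fun p : E × E => x * p.1 * p.2)).aestronglyMeasurable) 1
          fun p => le_of_eq (hn _)
      rw [integral_integral_swap hint]
      have : ∀ z : E, ∫ w, char ξ (x * w * z) ∂(subConv β β) = ((‖h x z‖ ^ 2 : ℝ) : ℂ) :=
        hsub_inner x
      simp only [this]
      exact integral_ofReal
    simp only [step]
    exact integral_ofReal
  -- the RHS value
  set S : ℝ := ∫ x, ∫ z, ‖h x z‖ ^ 2 ∂γ ∂α with hS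
  have hvnn : ∀ x : E, 0 ≤ ∫ z, ‖h x z‖ ^ 2 ∂γ := fun x =>
    integral_nonneg fun z => sq_nonneg _
  have hSnn : 0 ≤ S := integral_nonneg hvnn
  have hGnorm : ‖fourierAt (mulConv (mulConv α (subConv β β)) γ) ξ‖ = S := by
    rw [hG, Complex.norm_real, Real.norm_of_nonneg hSnn]
  -- measurability of auxiliary real functions
  have hsmnh : StronglyMeasurable fun q : E × E => ‖h q.1 q.2‖ := hsmh.norm
  have hsmu : StronglyMeasurable fun x : E => ∫ z, ‖h x z‖ ∂γ := hsmnh.integral_prod_right'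
  have hsmnh2 : StronglyMeasurable fun q : E × E => ‖h q.1 q.2‖ ^ 2 := hsmnh.pow 2
  have hsmv : StronglyMeasurable fun x : E => ∫ z, ‖h x z‖ ^ 2 ∂γ := hsmnh2.integral_prod_right'
  set u : E → ℝ := fun x => ∫ z, ‖h x z‖ ∂γ with hu
  have hunn : ∀ x, 0 ≤ u x := fun x => integral_nonneg fun z => norm_nonneg _
  have hub : ∀ x, u x ≤ (γ Set.univ).toReal * B := by
    intro x
    calc u x ≤ ∫ _z, B ∂γ := integral_mono_of_nonneg
          (Filter.Eventually.of_forall fun z => norm_nonneg _) (integrable_const B)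
          (Filter.Eventually.of_forall fun z => hbh x z)
    _ = (γ Set.univ).toReal * B := by simp [smul_eq_mul, Measure.real]
  -- chain of inequalities
  have c1 : ‖fourierAt (mulConv (mulConv α β) γ) ξ‖ ≤ ∫ x, u x ∂α := by
    rw [hF]
    calc ‖∫ x, ∫ z, h x z ∂γ ∂α‖ ≤ ∫ x, ‖∫ z, h x z ∂γ‖ ∂α := norm_integral_le_integral_norm _
    _ ≤ ∫ x, u x ∂α := by
        refine integral_mono_of_nonneg (Filter.Eventually.of_forall fun x => norm_nonneg _)
          (integrable_of_bound hsmu.aestronglyMeasurable ((γ Set.univ).toReal * B)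
            fun x => by rw [Real.norm_of_nonneg (hunn x)]; exact hub x)
          (Filter.Eventually.of_forall fun x => norm_integral_le_integral_norm _)
  have c2 : (∫ x, u x ∂α) ^ 2 ≤ ∫ x, u x ^ 2 ∂α :=
    sq_integral_le hα hsmu.aestronglyMeasurable hunn ((γ Set.univ).toReal * B) hub
  have c3 : ∀ x, u x ^ 2 ≤ ∫ z, ‖h x z‖ ^ 2 ∂γ := by
    intro x
    refine sq_integral_le hγ ?_ (fun z => norm_nonneg _) B (hbh x)
    exact (hsmnh.comp_measurable (measurable_const.prodMk measurable_id)).aestronglyMeasurable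
  have c4 : ∫ x, u x ^ 2 ∂α ≤ S := by
    refine integral_mono_of_nonneg (Filter.Eventually.of_forall fun x => sq_nonneg _)
      (integrable_of_bound hsmv.aestronglyMeasurable (B ^ 2) fun x => ?_)
      (Filter.Eventually.of_forall c3)
    rw [Real.norm_of_nonneg (hvnn x)]
    calc ∫ z, ‖h x z‖ ^ 2 ∂γ ≤ ∫ _z, B ^ 2 ∂γ := integral_mono_of_nonneg
          (Filter.Eventually.of_forall fun z => sq_nonneg _) (integrable_const _)
          (Filter.Eventually.of_forall fun z =>
            pow_le_pow_left₀ (norm_nonneg _) (hbh x z) 2)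
    _ ≤ B ^ 2 := by
        rw [integral_const, smul_eq_mul, Measure.real]
        have hγ' : (γ Set.univ).toReal ≤ 1 := by
          refine ENNReal.toReal_le_of_le_ofReal zero_le_one (by simpa using hγ)
        nlinarith [sq_nonneg B]
  calc ‖fourierAt (mulConv (mulConv α β) γ) ξ‖ ^ 2 ≤ (∫ x, u x ∂α) ^ 2 :=
      pow_le_pow_left₀ (norm_nonneg _) c1 2
  _ ≤ ∫ x, u x ^ 2 ∂α := c2
  _ ≤ S := c4
  _ = ‖fourierAt (mulConv (mulConv α (subConv β β)) γ) ξ‖ := hGnorm.symm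

end Key2
section Main
variable {E : Type*} [NormedRing E] [NormedAlgebra ℝ E] [FiniteDimensional ℝ E]
  [MeasurableSpace E] [BorelSpace E]

lemma Q_lemma (η : Measure E) [IsFiniteMeasure η] (hη : η Set.univ ≤ 1) :
    ∀ (m : ℕ) (γ : Measure E) (_ : IsFiniteMeasure γ), γ Set.univ ≤ 1 → ∀ ξ : E →ₗ[ℝ] ℝ,
      ‖fourierAt (mulConv (mulConvPow η (3 * m)) γ) ξ‖ ^ (2 ^ m) ≤
        ‖fourierAt (mulConv (mulConvPow (subConv (mulConvPow η 3) (mulConvPow η 3)) m) γ) ξ‖ := by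
  set μη : Measure E := subConv (mulConvPow η 3) (mulConvPow η 3) with hμη
  have h3mass : mulConvPow η 3 Set.univ ≤ 1 := mulConvPow_univ_le η hη 3
  have hμmass : μη Set.univ ≤ 1 := by
    rw [hμη, subConv_univ]
    calc mulConvPow η 3 Set.univ * mulConvPow η 3 Set.univ ≤ 1 * 1 := mul_le_mul' h3mass h3mass
    _ = 1 := one_mul 1
  intro m
  induction m with
  | zero =>
      intro γ hγfin hγ ξ
      haveI := hγfin
      simp only [Nat.mul_zero, pow_zero, pow_one, mulConvPow, dirac_one_mulConv]
      exact le_rfl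
  | succ m ih =>
      intro γ hγfin hγ ξ
      haveI := hγfin
      have hA : mulConvPow η (3 * (m + 1))
          = mulConv (mulConvPow η (3 * m)) (mulConvPow η 3) := by
        rw [show 3 * (m + 1) = 3 * m + 3 by ring, mulConvPow_add]
      have step1 := key_ineq (mulConvPow η (3 * m)) (mulConvPow η 3) γ
        (mulConvPow_univ_le η hη (3 * m)) hγ ξ
      rw [mulConv_assoc (mulConvPow η (3 * m)) (subConv (mulConvPow η 3) (mulConvPow η 3)) γ] at step1
      have hγ' : (mulConv μη γ) Set.univ ≤ 1 := by
        rw [mulConv_univ]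
        calc μη Set.univ * γ Set.univ ≤ 1 * 1 := mul_le_mul' hμmass hγ
        _ = 1 := one_mul 1
      have step2 := ih (mulConv μη γ) inferInstance hγ' ξ
      have hassoc2 : mulConv (mulConvPow μη m) (mulConv μη γ)
          = mulConv (mulConvPow μη (m + 1)) γ := by
        rw [← mulConv_assoc]; rfl
      rw [hassoc2] at step2
      calc ‖fourierAt (mulConv (mulConvPow η (3 * (m + 1))) γ) ξ‖ ^ 2 ^ (m + 1)
          = (‖fourierAt (mulConv (mulConv (mulConvPow η (3 * m)) (mulConvPow η 3)) γ) ξ‖ ^ 2)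
              ^ 2 ^ m := by rw [hA, ← pow_mul, pow_succ, mul_comm (2 ^ m) 2]
      _ ≤ ‖fourierAt (mulConv (mulConvPow η (3 * m)) (mulConv μη γ)) ξ‖ ^ 2 ^ m := by
          exact pow_le_pow_left₀ (sq_nonneg _) step1 _
      _ ≤ ‖fourierAt (mulConv (mulConvPow μη (m + 1)) γ) ξ‖ := step2

end Main

/-- For a measure `η` of mass at most one on a real associative algebra
`E`, setting `μ = η*η*η ⊟ η*η*η`, one has
`|(η^{*3m})^(ξ)|^(2^m) ≤ |(μ^{*m})^(ξ)|` for every `m ≥ 1` and every `ξ ∈ E*`. -/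
theorem fourier_triple_conv_power_bound
    {E : Type*} [NormedRing E] [NormedAlgebra ℝ E] [FiniteDimensional ℝ E]
    [MeasurableSpace E] [BorelSpace E]
    (η : Measure E) [IsFiniteMeasure η] (hη : η Set.univ ≤ 1) :
    ∀ m : ℕ, 1 ≤ m → ∀ ξ : E →ₗ[ℝ] ℝ,
      ‖fourierAt (mulConvPow η (3 * m)) ξ‖ ^ (2 ^ m) ≤
        ‖fourierAt (mulConvPow (subConv (mulConvPow η 3) (mulConvPow η 3)) m) ξ‖ := by
  intro m _ ξ
  have hd : (Measure.dirac (1 : E)) Set.univ ≤ 1 := by simp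
  have := Q_lemma η hη m (Measure.dirac 1) inferInstance hd ξ
  rwa [mulConv_dirac_one, mulConv_dirac_one] at this
end

section
/- Let V_1, V_2 be finite-dimensional real inner product spaces and let η_1, η_2 be Borel probability measures on V_1 and V_2 respectively. Let η_1 ⊗̇ η_2 denote the pushforward of η_1 ⊗ η_2 under the bilinear map V_1 × V_2 → V_1 ⊗ V_2. Given ε, κ > 0, for all δ > 0 sufficiently small: if each η_i is supported in the ball of radius δ^{-ε} and satisfies η_i(ρ-neighborhood of any proper affine subspace) ≤ δ^{-ε} ρ^κ for all ρ ≥ δ, then η_1 ⊗̇ η_2 is supported in the ball of radius δ^{-2ε} and satisfies (η_1 ⊗̇ η_2)(ρ-neighborhood of any proper affine subspace of V_1 ⊗ V_2) ≤ C δ^{-2ε} ρ^{κ/2} for all ρ ≥ δ, where C depends only on the dimensions. -/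
open MeasureTheory

lemma slab_subset_thickening {V : Type*} [NormedAddCommGroup V] [InnerProductSpace ℝ V]
    (w : V) (hw : w ≠ 0) (c : ℝ) :
    ∃ H : AffineSubspace ℝ V, H ≠ ⊤ ∧
      ∀ ρ' : ℝ, ∀ a : V, |(inner ℝ a w : ℝ) - c| < ‖w‖ * ρ' →
        a ∈ Metric.thickening ρ' (H : Set V) := by
  have hwn : (0:ℝ) < ‖w‖ := norm_pos_iff.mpr hw
  have hww : (inner ℝ w w : ℝ) = ‖w‖ * ‖w‖ := real_inner_self_eq_norm_mul_norm w
  set p₀ : V := (c / (‖w‖ * ‖w‖)) • w with hp₀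
  refine ⟨AffineSubspace.mk' p₀ (Submodule.span ℝ {w})ᗮ, ?_, ?_⟩
  · intro htop
    have hmem : p₀ + w ∈ AffineSubspace.mk' p₀ (Submodule.span ℝ {w})ᗮ := htop ▸ trivial
    rw [AffineSubspace.mem_mk'] at hmem
    have : (p₀ + w) -ᵥ p₀ = w := by simp [vsub_eq_sub]
    rw [this, Submodule.mem_orthogonal_singleton_iff_inner_right, hww] at hmem
    nlinarith
  · intro ρ' a ha
    set q : V := a - (((inner ℝ a w : ℝ) - c) / (‖w‖ * ‖w‖)) • w with hq
    have hqmem : q ∈ AffineSubspace.mk' p₀ (Submodule.span ℝ {w})ᗮ := by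
      rw [AffineSubspace.mem_mk',
        Submodule.mem_orthogonal_singleton_iff_inner_right]
      have : q -ᵥ p₀ = a - ((((inner ℝ a w : ℝ) - c) / (‖w‖ * ‖w‖)) + c / (‖w‖*‖w‖)) • w := by
        rw [vsub_eq_sub, hq, hp₀, add_smul]; abel
      rw [this, inner_sub_right, inner_smul_right, hww, real_inner_comm]
      have h0 : (‖w‖ * ‖w‖) ≠ 0 := by positivity
      field_simp
      ring
    rw [Metric.mem_thickening_iff]
    refine ⟨q, hqmem, ?_⟩
    have : a - q = (((inner ℝ a w : ℝ) - c) / (‖w‖ * ‖w‖)) • w := by rw [hq]; abel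
    rw [dist_eq_norm, this, norm_smul]
    rw [Real.norm_eq_abs, abs_div, abs_of_nonneg (by positivity : (0:ℝ) ≤ ‖w‖ * ‖w‖)]
    rw [div_mul_eq_mul_div, div_lt_iff₀ (by positivity)]
    calc |(inner ℝ a w : ℝ) - c| * ‖w‖ < (‖w‖ * ρ') * ‖w‖ := by
          apply mul_lt_mul_of_pos_right ha hwn
      _ = ρ' * (‖w‖ * ‖w‖) := by ring

lemma exists_normal_of_proper {W : Type*} [NormedAddCommGroup W] [InnerProductSpace ℝ W]
    [FiniteDimensional ℝ W]
    (A : AffineSubspace ℝ W) (hA : A ≠ ⊤) (hne : (A : Set W).Nonempty) :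
    ∃ u : W, ‖u‖ = 1 ∧ ∃ c : ℝ, ∀ y ∈ A, (inner ℝ y u : ℝ) = c := by
  have hdir : A.direction ≠ ⊤ := fun h =>
    hA ((AffineSubspace.direction_eq_top_iff_of_nonempty hne).mp h)
  have horth : A.directionᗮ ≠ ⊥ := fun h => hdir (Submodule.orthogonal_eq_bot_iff.mp h)
  obtain ⟨v, hv, hv0⟩ := (Submodule.ne_bot_iff _).mp horth
  obtain ⟨p, hp⟩ := hne
  refine ⟨‖v‖⁻¹ • v, ?_, inner ℝ p (‖v‖⁻¹ • v), ?_⟩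
  · rw [norm_smul, norm_inv, norm_norm, inv_mul_cancel₀ (norm_ne_zero_iff.mpr hv0)]
  · intro y hy
    have hd : y -ᵥ p ∈ A.direction := AffineSubspace.vsub_mem_direction hy hp
    have h0 : (inner ℝ (y -ᵥ p) v : ℝ) = 0 := (Submodule.mem_orthogonal _ v).mp hv _ hd
    have : (inner ℝ (y - p) (‖v‖⁻¹ • v) : ℝ) = 0 := by
      rw [inner_smul_right]
      simpa [vsub_eq_sub] using Or.inr h0
    have h2 : (inner ℝ y (‖v‖⁻¹ • v) : ℝ) - inner ℝ p (‖v‖⁻¹ • v) = 0 := by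
      rw [← inner_sub_left]; exact this
    linarith

set_option maxHeartbeats 2000000 in

/-- Affine non-concentration passes to the tensor product: if `η₁, η₂`
are probability measures on Euclidean spaces `V₁, V₂` satisfying `ANC(ε, κ)` at scale
`δ`, then the pushforward `η₁ ⊗̇ η₂` on `V₁ ⊗ V₂` (modelled by a Euclidean space `W`
with an inner-product-compatible bilinear map `ι` of full span) satisfies
`ANC`-type bounds with parameters `(2ε, κ/2)`, with a constant depending only on the
dimensions. -/
theorem tensor_affine_nonconcentration
    {V₁ V₂ W : Type*}
    [NormedAddCommGroup V₁] [InnerProductSpace ℝ V₁] [FiniteDimensional ℝ V₁]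
    [NormedAddCommGroup V₂] [InnerProductSpace ℝ V₂] [FiniteDimensional ℝ V₂]
    [NormedAddCommGroup W] [InnerProductSpace ℝ W] [FiniteDimensional ℝ W]
    [MeasurableSpace V₁] [BorelSpace V₁] [MeasurableSpace V₂] [BorelSpace V₂]
    [MeasurableSpace W] [BorelSpace W]
    -- `ι` models the canonical bilinear map `V₁ × V₂ → V₁ ⊗ V₂` with its Euclidean structure
    (ι : V₁ →ₗ[ℝ] V₂ →ₗ[ℝ] W)
    (hι : ∀ (a c : V₁) (b d : V₂), (inner ℝ (ι a b) (ι c d) : ℝ) = inner ℝ a c * inner ℝ b d)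
    (hspan : Submodule.span ℝ {w : W | ∃ a b, w = ι a b} = ⊤) :
    ∃ C : ℝ, 0 < C ∧
      ∀ ε κ : ℝ, 0 < ε → 0 < κ →
        ∃ δ₀ : ℝ, 0 < δ₀ ∧
          ∀ δ : ℝ, 0 < δ → δ ≤ δ₀ →
            ∀ (η₁ : Measure V₁) (η₂ : Measure V₂),
              IsProbabilityMeasure η₁ → IsProbabilityMeasure η₂ →
              -- `η₁` satisfies ANC(ε, κ) at scale δ
              η₁ (Metric.closedBall 0 (δ ^ (-ε)))ᶜ = 0 →
              (∀ ρ : ℝ, δ ≤ ρ → ∀ Waff : AffineSubspace ℝ V₁, Waff ≠ ⊤ →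
                η₁ (Metric.thickening ρ (Waff : Set V₁)) ≤ ENNReal.ofReal (δ ^ (-ε) * ρ ^ κ)) →
              -- `η₂` satisfies ANC(ε, κ) at scale δ
              η₂ (Metric.closedBall 0 (δ ^ (-ε)))ᶜ = 0 →
              (∀ ρ : ℝ, δ ≤ ρ → ∀ Waff : AffineSubspace ℝ V₂, Waff ≠ ⊤ →
                η₂ (Metric.thickening ρ (Waff : Set V₂)) ≤ ENNReal.ofReal (δ ^ (-ε) * ρ ^ κ)) →
              -- conclusion for `η₁ ⊗̇ η₂`
              (Measure.map (fun p : V₁ × V₂ => ι p.1 p.2) (η₁.prod η₂))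
                  (Metric.closedBall 0 (δ ^ (-(2 * ε))))ᶜ = 0 ∧
              ∀ ρ : ℝ, δ ≤ ρ → ∀ Waff : AffineSubspace ℝ W, Waff ≠ ⊤ →
                (Measure.map (fun p : V₁ × V₂ => ι p.1 p.2) (η₁.prod η₂))
                    (Metric.thickening ρ (Waff : Set W)) ≤
                  ENNReal.ofReal (C * δ ^ (-(2 * ε)) * ρ ^ (κ / 2)) := by
  classical
  -- continuity of the bilinear map
  have hcont : Continuous fun p : V₁ × V₂ => ι p.1 p.2 := by
    let A : V₁ →ₗ[ℝ] (V₂ →L[ℝ] W) :=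
      (LinearMap.toContinuousLinearMap : (V₂ →ₗ[ℝ] W) ≃ₗ[ℝ] (V₂ →L[ℝ] W)).toLinearMap.comp ι
    have hA : Continuous A := A.continuous_of_finiteDimensional
    have : Continuous fun p : V₁ × V₂ => (A p.1) p.2 :=
      isBoundedBilinearMap_apply.continuous.comp
        ((hA.comp continuous_fst).prodMk continuous_snd)
    simpa [A] using this
  have hmeas : Measurable fun p : V₁ × V₂ => ι p.1 p.2 := hcont.measurable
  -- norm multiplicativity
  have hnorm : ∀ (a : V₁) (b : V₂), ‖ι a b‖ = ‖a‖ * ‖b‖ := by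
    intro a b
    have h := hι a a b b
    rw [real_inner_self_eq_norm_mul_norm, real_inner_self_eq_norm_mul_norm,
      real_inner_self_eq_norm_mul_norm] at h
    exact (mul_self_inj (norm_nonneg _)
      (mul_nonneg (norm_nonneg _) (norm_nonneg _))).mp (by rw [h]; ring)
  -- orthonormal basis of W
  set e := stdOrthonormalBasis ℝ V₁ with he_def
  set f := stdOrthonormalBasis ℝ V₂ with hf_def
  set o : (Fin (Module.finrank ℝ V₁) × Fin (Module.finrank ℝ V₂)) → W :=
    fun p => ι (e p.1) (f p.2) with ho
  have horth : Orthonormal ℝ o := by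
    rw [orthonormal_iff_ite]
    intro p q
    have he := orthonormal_iff_ite.mp e.orthonormal p.1 q.1
    have hf := orthonormal_iff_ite.mp f.orthonormal p.2 q.2
    rw [ho]
    simp only [hι, he, hf]
    by_cases h1 : p.1 = q.1 <;> by_cases h2 : p.2 = q.2 <;>
      simp [h1, h2, Prod.ext_iff]
  have hsp : ⊤ ≤ Submodule.span ℝ (Set.range o) := by
    rw [← hspan]
    apply Submodule.span_le.mpr
    rintro w ⟨a, b, rfl⟩
    have hab : ι a b = ∑ i, ∑ j, (e.repr a i * f.repr b j) • o (i, j) := by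
      conv_lhs => rw [← e.sum_repr a, ← f.sum_repr b]
      simp [map_sum, _root_.map_smul, LinearMap.sum_apply, LinearMap.smul_apply,
        Finset.smul_sum, smul_smul, ho]
      rw [Finset.sum_comm]
      exact Finset.sum_congr rfl fun i _ => Finset.sum_congr rfl fun j _ => by rw [mul_comm]
    rw [hab]
    exact Submodule.sum_mem _ fun i _ => Submodule.sum_mem _ fun j _ =>
      Submodule.smul_mem _ _ (Submodule.subset_span ⟨(i, j), rfl⟩)
  set B : OrthonormalBasis _ ℝ W := OrthonormalBasis.mk horth hsp with hB_def
  have hB : ∀ p, B p = ι (e p.1) (f p.2) := fun p => by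
    simp [hB_def, OrthonormalBasis.coe_mk, ho]
  -- dimension constant
  set D : ℝ := ((Module.finrank ℝ V₁ * Module.finrank ℝ V₂ : ℕ) : ℝ) with hD_def
  have hD0 : 0 ≤ D := by positivity
  refine ⟨2, two_pos, ?_⟩
  intro ε κ hε hκ
  refine ⟨min 1 ((D + 1) ^ (-(κ / (2 * ε)))), lt_min one_pos (Real.rpow_pos_of_pos (by linarith) _), ?_⟩
  intro δ hδ hδ₀ η₁ η₂ hP₁ hP₂ hs₁ h₁ hs₂ h₂
  have hδ1 : δ ≤ 1 := le_trans hδ₀ (min_le_left _ _)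
  have hδD : δ ≤ (D + 1) ^ (-(κ / (2 * ε))) := le_trans hδ₀ (min_le_right _ _)
  -- key absorption: D ^ (κ/2) ≤ δ ^ (-ε)
  have habsorb : D ^ (κ / 2) ≤ δ ^ (-ε) := by
    have h1 : ((D + 1) ^ (-(κ / (2 * ε)))) ^ (-ε) ≤ δ ^ (-ε) :=
      Real.rpow_le_rpow_of_nonpos hδ hδD (by linarith)
    have h2 : ((D + 1) ^ (-(κ / (2 * ε)))) ^ (-ε) = (D + 1) ^ (κ / 2) := by
      rw [← Real.rpow_mul (by linarith)]
      congr 1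
      field_simp
    calc D ^ (κ / 2) ≤ (D + 1) ^ (κ / 2) :=
          Real.rpow_le_rpow hD0 (by linarith) (by positivity)
      _ ≤ δ ^ (-ε) := h2 ▸ h1
  have hδε : δ ^ (-ε) ≤ δ ^ (-(2 * ε)) :=
    Real.rpow_le_rpow_of_exponent_ge hδ hδ1 (by linarith)
  have hδ2ε : δ ^ (-(2 * ε)) = δ ^ (-ε) * δ ^ (-ε) := by
    rw [← Real.rpow_add hδ]; ring_nf
  constructor
  · -- support statement
    rw [Measure.map_apply hmeas (measurableSet_closedBall.compl)]
    have hkey : ∀ (a : V₁) (b : V₂), ‖a‖ ≤ δ ^ (-ε) → ‖b‖ ≤ δ ^ (-ε) →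
        ‖ι a b‖ ≤ δ ^ (-(2 * ε)) := by
      intro a b ha hb
      rw [hnorm, hδ2ε]
      exact mul_le_mul ha hb (norm_nonneg _) (Real.rpow_nonneg hδ.le _)
    have hsub : (fun p : V₁ × V₂ => ι p.1 p.2) ⁻¹' (Metric.closedBall 0 (δ ^ (-(2 * ε))))ᶜ ⊆
        ((Metric.closedBall (0:V₁) (δ ^ (-ε)))ᶜ ×ˢ (Set.univ : Set V₂)) ∪
          ((Set.univ : Set V₁) ×ˢ (Metric.closedBall (0:V₂) (δ ^ (-ε)))ᶜ) := by
      rintro ⟨a, b⟩ hp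
      rw [Set.mem_union]
      by_contra hcon
      push_neg at hcon
      obtain ⟨h1, h2⟩ := hcon
      simp only [Set.mem_prod, Set.mem_univ, and_true, true_and, Set.mem_compl_iff,
        Metric.mem_closedBall, dist_zero_right, not_not] at h1 h2
      simp only [Set.mem_preimage, Set.mem_compl_iff, Metric.mem_closedBall,
        dist_zero_right, not_le] at hp
      exact absurd (hkey a b h1 h2) (not_le.mpr hp)
    refine measure_mono_null hsub (measure_union_null ?_ ?_)
    · rw [Measure.prod_prod, hs₁, zero_mul]
    · rw [Measure.prod_prod, hs₂, mul_zero]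
  · -- non-concentration statement
    intro ρ hρ Waff hW
    have hρ0 : 0 < ρ := lt_of_lt_of_le hδ hρ
    by_cases hWne : (Waff : Set W).Nonempty
    swap
    · rw [Set.not_nonempty_iff_eq_empty.mp hWne, Metric.thickening_empty, measure_empty]
      exact zero_le
    obtain ⟨u, hu1, c, hc⟩ := exists_normal_of_proper Waff hW hWne
    -- nonemptiness of the index type
    by_cases hIdx : Nonempty (Fin (Module.finrank ℝ V₁) × Fin (Module.finrank ℝ V₂))
    swap
    · exfalso
      haveI := not_nonempty_iff.mp hIdx
      have hu0 : u = 0 := by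
        have := (B.sum_repr u).symm
        simpa [Finset.univ_eq_empty] using this
      rw [hu0, norm_zero] at hu1
      exact one_ne_zero hu1.symm
    haveI := hIdx
    -- Parseval and a large coefficient
    have hsum : ∑ p, (inner ℝ (B p) u : ℝ) * (inner ℝ (B p) u : ℝ) = 1 := by
      have h := B.sum_inner_mul_inner u u
      rw [real_inner_self_eq_norm_mul_norm, hu1, one_mul] at h
      calc ∑ p, (inner ℝ (B p) u : ℝ) * (inner ℝ (B p) u : ℝ)
          = ∑ p, (inner ℝ u (B p) : ℝ) * (inner ℝ (B p) u : ℝ) := by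
            refine Finset.sum_congr rfl fun p _ => ?_
            rw [real_inner_comm u (B p)]
        _ = 1 := h
    have hcard : ((Fintype.card (Fin (Module.finrank ℝ V₁) × Fin (Module.finrank ℝ V₂)) : ℕ) : ℝ) = D := by
      simp [hD_def]
    have hd0 : (0:ℝ) < D := by
      rw [← hcard]
      exact_mod_cast Fintype.card_pos
    obtain ⟨p₀, -, hp₀⟩ :=
      Finset.exists_le_of_sum_le (f := fun _ => 1 / D)
        (g := fun p => (inner ℝ (B p) u : ℝ) * (inner ℝ (B p) u : ℝ))
        (Finset.univ_nonempty) (by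
          rw [hsum, Finset.sum_const, nsmul_eq_mul, Finset.card_univ, hcard]
          rw [mul_one_div, div_self hd0.ne'])
    -- the Riesz vector in V₂ detecting the large coefficient
    set gvec : V₂ := (InnerProductSpace.toDual ℝ V₂).symm
      ((innerSL ℝ u).comp (LinearMap.toContinuousLinearMap (ι (e p₀.1)))) with hgvec_def
    have hgvec : ∀ b : V₂, (inner ℝ gvec b : ℝ) = inner ℝ (ι (e p₀.1) b) u := by
      intro b
      rw [hgvec_def, InnerProductSpace.toDual_symm_apply]
      simp [real_inner_comm]
    -- the Riesz vector in V₁ for each b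
    set wv : V₂ → V₁ := fun b => (InnerProductSpace.toDual ℝ V₁).symm
      ((innerSL ℝ u).comp (LinearMap.toContinuousLinearMap (ι.flip b))) with hwv_def
    have hwv : ∀ (b : V₂) (a : V₁), (inner ℝ (wv b) a : ℝ) = inner ℝ (ι a b) u := by
      intro b a
      rw [hwv_def]
      rw [InnerProductSpace.toDual_symm_apply]
      simp [real_inner_comm]
    have hwv_lb : ∀ b : V₂, |(inner ℝ gvec b : ℝ)| ≤ ‖wv b‖ := by
      intro b
      have h1 : (inner ℝ (wv b) (e p₀.1) : ℝ) = inner ℝ gvec b := by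
        rw [hwv, hgvec]
      calc |(inner ℝ gvec b : ℝ)| = |(inner ℝ (wv b) (e p₀.1) : ℝ)| := by rw [h1]
        _ ≤ ‖wv b‖ * ‖e p₀.1‖ := abs_real_inner_le_norm _ _
        _ = ‖wv b‖ := by rw [e.orthonormal.1 p₀.1, mul_one]
    -- bounds on ‖gvec‖
    have hg_lb : 1 / Real.sqrt D ≤ ‖gvec‖ := by
      have h1 : (inner ℝ gvec (f p₀.2) : ℝ) = inner ℝ (B p₀) u := by
        rw [hgvec, hB]
      have h2 : |(inner ℝ (B p₀) u : ℝ)| ≤ ‖gvec‖ := by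
        rw [← h1]
        calc |(inner ℝ gvec (f p₀.2) : ℝ)| ≤ ‖gvec‖ * ‖f p₀.2‖ := abs_real_inner_le_norm _ _
          _ = ‖gvec‖ := by rw [f.orthonormal.1 p₀.2, mul_one]
      have h3 : 1 / Real.sqrt D ≤ |(inner ℝ (B p₀) u : ℝ)| := by
        have := Real.sqrt_le_sqrt hp₀
        rw [Real.sqrt_mul_self_eq_abs] at this
        calc 1 / Real.sqrt D = Real.sqrt (1 / D) := by
              rw [one_div, one_div, Real.sqrt_inv]
          _ ≤ _ := this
      linarith
    have hg_pos : (0:ℝ) < ‖gvec‖ :=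
      lt_of_lt_of_le (by positivity) hg_lb
    have hg0 : gvec ≠ 0 := norm_pos_iff.mp hg_pos
    have hg_ub : ‖gvec‖ ≤ 1 := by
      have h1 : (inner ℝ gvec gvec : ℝ) = inner ℝ (ι (e p₀.1) gvec) u := hgvec gvec
      have h2 : |(inner ℝ (ι (e p₀.1) gvec) u : ℝ)| ≤ ‖gvec‖ := by
        calc |(inner ℝ (ι (e p₀.1) gvec) u : ℝ)| ≤ ‖ι (e p₀.1) gvec‖ * ‖u‖ :=
              abs_real_inner_le_norm _ _
          _ = ‖gvec‖ := by rw [hnorm, e.orthonormal.1 p₀.1, one_mul, hu1, mul_one]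
      have h3 : ‖gvec‖ * ‖gvec‖ ≤ ‖gvec‖ := by
        rw [← real_inner_self_eq_norm_mul_norm, h1]
        exact le_trans (le_abs_self _) h2
      nlinarith
    -- square-root scale
    set sρ : ℝ := ρ ^ ((1:ℝ)/2) with hsρ_def
    have hsρ0 : 0 < sρ := Real.rpow_pos_of_pos hρ0 _
    have hsρ_sq : sρ * sρ = ρ := by
      rw [hsρ_def, ← Real.rpow_add hρ0]; norm_num
    have hδsρ : δ ≤ sρ := by
      rcases le_or_gt ρ 1 with h | h
      · calc δ ≤ ρ := hρ
          _ = ρ ^ (1:ℝ) := (Real.rpow_one ρ).symm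
          _ ≤ sρ := Real.rpow_le_rpow_of_exponent_ge hρ0 h (by norm_num)
      · calc δ ≤ 1 := hδ1
          _ ≤ sρ := Real.one_le_rpow h.le (by norm_num)
    have hsρκ : sρ ^ κ = ρ ^ (κ/2) := by
      rw [hsρ_def, ← Real.rpow_mul hρ0.le]
      congr 1
      ring
    -- slab inclusion in W
    have hslab : Metric.thickening ρ (Waff : Set W) ⊆ {w : W | |(inner ℝ w u : ℝ) - c| < ρ} := by
      intro x hx
      obtain ⟨y, hy, hdist⟩ := Metric.mem_thickening_iff.mp hx
      have hxy : (inner ℝ x u : ℝ) - c = inner ℝ (x - y) u := by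
        rw [inner_sub_left, hc y hy]
      rw [Set.mem_setOf_eq, hxy]
      calc |(inner ℝ (x - y) u : ℝ)| ≤ ‖x - y‖ * ‖u‖ := abs_real_inner_le_norm _ _
        _ = dist x y := by rw [hu1, mul_one, dist_eq_norm]
        _ < ρ := hdist
    have hslab_open : IsOpen {w : W | |(inner ℝ w u : ℝ) - c| < ρ} := by
      have hco : Continuous fun w : W => |(inner ℝ w u : ℝ) - c| :=
        (((continuous_id.inner continuous_const)).sub continuous_const).abs
      exact isOpen_lt hco continuous_const
    -- Bad set
    set Bad : Set V₂ := {b : V₂ | |(inner ℝ b gvec : ℝ)| < sρ} with hBad_def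
    have hBad_open : IsOpen Bad := by
      have hco : Continuous fun b : V₂ => |(inner ℝ b gvec : ℝ)| :=
        ((continuous_id.inner continuous_const)).abs
      exact isOpen_lt hco continuous_const
    set S : Set (V₁ × V₂) :=
      (fun p : V₁ × V₂ => ι p.1 p.2) ⁻¹' {w : W | |(inner ℝ w u : ℝ) - c| < ρ} with hS_def
    have hS_meas : MeasurableSet S := (hslab_open.preimage hcont).measurableSet
    -- decomposition
    have hsplit : (η₁.prod η₂) S ≤
        (η₁.prod η₂) (S ∩ (Set.univ : Set V₁) ×ˢ Badᶜ) +
          (η₁.prod η₂) ((Set.univ : Set V₁) ×ˢ Bad) := by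
      refine le_trans (measure_mono ?_) (measure_union_le _ _)
      intro p hp
      by_cases hb : p.2 ∈ Bad
      · exact Or.inr ⟨Set.mem_univ _, hb⟩
      · exact Or.inl ⟨hp, Set.mem_univ _, hb⟩
    have hsd : (0:ℝ) < Real.sqrt D := Real.sqrt_pos.mpr hd0
    -- Bad term
    have hbad : (η₁.prod η₂) ((Set.univ : Set V₁) ×ˢ Bad) ≤
        ENNReal.ofReal (δ ^ (-(2*ε)) * ρ ^ (κ/2)) := by
      rw [Measure.prod_prod, measure_univ, one_mul]
      obtain ⟨H₂, hH₂top, hH₂⟩ := slab_subset_thickening gvec hg0 0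
      set ρ₂ : ℝ := sρ / ‖gvec‖ with hρ₂_def
      have hρ₂δ : δ ≤ ρ₂ := by
        refine le_trans hδsρ ?_
        rw [le_div_iff₀ hg_pos]
        nlinarith
      have hsub : Bad ⊆ Metric.thickening ρ₂ (H₂ : Set V₂) := by
        intro b hb
        refine hH₂ ρ₂ b ?_
        rw [sub_zero, hρ₂_def, mul_div_cancel₀ _ hg_pos.ne']
        exact hb
      refine le_trans (measure_mono hsub) (le_trans (h₂ ρ₂ hρ₂δ H₂ hH₂top) ?_)
      apply ENNReal.ofReal_le_ofReal
      have h1sd : (1:ℝ) ≤ Real.sqrt D * ‖gvec‖ := by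
        calc (1:ℝ) = Real.sqrt D * (1 / Real.sqrt D) := by field_simp
          _ ≤ Real.sqrt D * ‖gvec‖ := mul_le_mul_of_nonneg_left hg_lb hsd.le
      have hρ₂ub : ρ₂ ≤ sρ * Real.sqrt D := by
        rw [hρ₂_def, div_le_iff₀ hg_pos]
        calc sρ = sρ * 1 := (mul_one _).symm
          _ ≤ sρ * (Real.sqrt D * ‖gvec‖) := mul_le_mul_of_nonneg_left h1sd hsρ0.le
          _ = sρ * Real.sqrt D * ‖gvec‖ := by ring
      have h2 : ρ₂ ^ κ ≤ ρ ^ (κ/2) * D ^ (κ/2) := by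
        calc ρ₂ ^ κ ≤ (sρ * Real.sqrt D) ^ κ :=
              Real.rpow_le_rpow (by positivity) hρ₂ub hκ.le
          _ = sρ ^ κ * (Real.sqrt D) ^ κ := Real.mul_rpow hsρ0.le (Real.sqrt_nonneg _)
          _ = ρ ^ (κ/2) * D ^ (κ/2) := by
              rw [hsρκ, Real.sqrt_eq_rpow, ← Real.rpow_mul hD0]
              congr 2
              ring
      calc δ ^ (-ε) * ρ₂ ^ κ ≤ δ ^ (-ε) * (ρ ^ (κ/2) * D ^ (κ/2)) :=
            mul_le_mul_of_nonneg_left h2 (Real.rpow_nonneg hδ.le _)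
        _ = (δ ^ (-ε) * D ^ (κ/2)) * ρ ^ (κ/2) := by ring
        _ ≤ (δ ^ (-ε) * δ ^ (-ε)) * ρ ^ (κ/2) := by
            apply mul_le_mul_of_nonneg_right ?_ (Real.rpow_nonneg hρ0.le _)
            exact mul_le_mul_of_nonneg_left habsorb (Real.rpow_nonneg hδ.le _)
        _ = δ ^ (-(2*ε)) * ρ ^ (κ/2) := by rw [← hδ2ε]
    -- Good term
    set K : ENNReal := ENNReal.ofReal (δ ^ (-(2*ε)) * ρ ^ (κ/2)) with hK_def
    have hgood : (η₁.prod η₂) (S ∩ (Set.univ : Set V₁) ×ˢ Badᶜ) ≤ K := by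
      have hmeas2 : MeasurableSet (S ∩ (Set.univ : Set V₁) ×ˢ Badᶜ) :=
        hS_meas.inter (MeasurableSet.univ.prod hBad_open.measurableSet.compl)
      rw [Measure.prod_apply_symm hmeas2]
      have hpt : ∀ b : V₂, η₁ ((fun a => (a, b)) ⁻¹' (S ∩ (Set.univ : Set V₁) ×ˢ Badᶜ)) ≤ K := by
        intro b
        by_cases hb : b ∈ Bad
        · have hempty : ((fun a : V₁ => (a, b)) ⁻¹' (S ∩ (Set.univ : Set V₁) ×ˢ Badᶜ)) = ∅ := by
            ext a
            simp only [Set.mem_preimage, Set.mem_inter_iff, Set.mem_prod, Set.mem_univ,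
              true_and, Set.mem_compl_iff, Set.mem_empty_iff_false, iff_false, not_and,
              not_not]
            intro _
            exact hb
          rw [hempty, measure_empty]
          exact zero_le
        · have hblb : sρ ≤ ‖wv b‖ := by
            have h1 : sρ ≤ |(inner ℝ b gvec : ℝ)| := not_lt.mp hb
            calc sρ ≤ |(inner ℝ b gvec : ℝ)| := h1
              _ = |(inner ℝ gvec b : ℝ)| := by rw [real_inner_comm]
              _ ≤ ‖wv b‖ := hwv_lb b
          have hwb0 : wv b ≠ 0 := by
            intro h0
            rw [h0, norm_zero] at hblb
            exact absurd hblb (not_le.mpr hsρ0)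
          have hwbpos : 0 < ‖wv b‖ := lt_of_lt_of_le hsρ0 hblb
          obtain ⟨H₁, hH₁top, hH₁⟩ := slab_subset_thickening (wv b) hwb0 c
          set ρ₁ : ℝ := max δ (ρ / ‖wv b‖) with hρ₁_def
          have hρ₁δ : δ ≤ ρ₁ := le_max_left _ _
          have hsub : ((fun a : V₁ => (a, b)) ⁻¹' (S ∩ (Set.univ : Set V₁) ×ˢ Badᶜ)) ⊆
              Metric.thickening ρ₁ (H₁ : Set V₁) := by
            intro a ha
            obtain ⟨haS, -⟩ := ha
            simp only [hS_def, Set.mem_preimage, Set.mem_setOf_eq] at haS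
            refine hH₁ ρ₁ a ?_
            have h2 : (inner ℝ a (wv b) : ℝ) = inner ℝ (ι a b) u := by
              rw [real_inner_comm]; exact hwv b a
            rw [h2]
            calc |(inner ℝ (ι a b) u : ℝ) - c| < ρ := haS
              _ = ‖wv b‖ * (ρ / ‖wv b‖) := by field_simp
              _ ≤ ‖wv b‖ * ρ₁ := mul_le_mul_of_nonneg_left (le_max_right _ _) hwbpos.le
          refine le_trans (measure_mono hsub) (le_trans (h₁ ρ₁ hρ₁δ H₁ hH₁top) ?_)
          rw [hK_def]
          apply ENNReal.ofReal_le_ofReal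
          have hρ₁ub : ρ₁ ≤ sρ := by
            apply max_le hδsρ
            rw [div_le_iff₀ hwbpos]
            calc ρ = sρ * sρ := hsρ_sq.symm
              _ ≤ sρ * ‖wv b‖ := mul_le_mul_of_nonneg_left hblb hsρ0.le
          have hρ₁κ : ρ₁ ^ κ ≤ ρ ^ (κ/2) := by
            rw [← hsρκ]
            exact Real.rpow_le_rpow (le_trans hδ.le hρ₁δ) hρ₁ub hκ.le
          calc δ ^ (-ε) * ρ₁ ^ κ ≤ δ ^ (-ε) * ρ ^ (κ/2) :=
                mul_le_mul_of_nonneg_left hρ₁κ (Real.rpow_nonneg hδ.le _)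
            _ ≤ δ ^ (-(2*ε)) * ρ ^ (κ/2) :=
                mul_le_mul_of_nonneg_right hδε (Real.rpow_nonneg hρ0.le _)
      calc ∫⁻ b, η₁ ((fun a => (a, b)) ⁻¹' (S ∩ (Set.univ : Set V₁) ×ˢ Badᶜ)) ∂η₂
          ≤ ∫⁻ _, K ∂η₂ := lintegral_mono hpt
        _ = K := by rw [lintegral_const, measure_univ, mul_one]
    -- combine
    rw [Measure.map_apply hmeas Metric.isOpen_thickening.measurableSet]
    calc (η₁.prod η₂) ((fun p : V₁ × V₂ => ι p.1 p.2) ⁻¹' Metric.thickening ρ (Waff : Set W))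
        ≤ (η₁.prod η₂) S := measure_mono (Set.preimage_mono hslab)
      _ ≤ (η₁.prod η₂) (S ∩ (Set.univ : Set V₁) ×ˢ Badᶜ) +
            (η₁.prod η₂) ((Set.univ : Set V₁) ×ˢ Bad) := hsplit
      _ ≤ K + K := add_le_add hgood hbad
      _ ≤ ENNReal.ofReal (2 * δ ^ (-(2 * ε)) * ρ ^ (κ / 2)) := by
          rw [hK_def, ← ENNReal.ofReal_add (by positivity) (by positivity)]
          apply ENNReal.ofReal_le_ofReal
          apply le_of_eq
          ring
end

section
/- Let μ be a Borel probability measure on SL_d(ℤ) and ν a Borel probability measure on 𝕋^d. Suppose |(μ*ν)^∧(a_0)| ≥ t_0 > 0 for some a_0 ∈ ℤ^d, where μ*ν is the pushforward of μ⊗ν under (g,x) ↦ gx. Then for every integer k ≥ 1, the set A = {g ∈ Mat_d(ℤ) : |ν̂(a_0 g)| ≥ t_0^{2k}/2} satisfies (μ^{⊞k} ⊟ μ^{⊞k})(A) ≥ t_0^{2k}/2, where μ^{⊞k} is the k-fold additive convolution of μ (viewed as a measure on Mat_d(ℤ)) and ⊟ is the difference convolution. -/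
open MeasureTheory
open scoped ComplexConjugate

instance matIntMeasurableSpace (d : ℕ) :
    MeasurableSpace (Matrix (Fin d) (Fin d) ℤ) := ⊤

instance slIntMeasurableSpace (d : ℕ) :
    MeasurableSpace (Matrix.SpecialLinearGroup (Fin d) ℤ) := ⊤

/-- The Fourier coefficient of a measure `ν` on the torus `𝕋^d = (ℝ/ℤ)^d` at a
frequency `a ∈ ℤ^d`. -/
noncomputable def torusFourier {d : ℕ} (ν : Measure (Fin d → AddCircle (1 : ℝ)))
    (a : Fin d → ℤ) : ℂ :=
  ∫ x, ∏ i, fourier (a i) (x i) ∂ν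

/-- The action convolution `μ * ν` on the torus: image of `μ ⊗ ν` under `(g, x) ↦ gx`. -/
noncomputable def actConv {d : ℕ} (μ : Measure (Matrix.SpecialLinearGroup (Fin d) ℤ))
    (ν : Measure (Fin d → AddCircle (1 : ℝ))) : Measure (Fin d → AddCircle (1 : ℝ)) :=
  Measure.map (fun p : Matrix.SpecialLinearGroup (Fin d) ℤ × (Fin d → AddCircle (1 : ℝ)) => fun i => ∑ j, ((p.1 : Matrix (Fin d) (Fin d) ℤ) i j) • p.2 j)
    (μ.prod ν)

/-- The `k`-fold additive convolution `μ^{⊞k}` of a measure on `SL_d(ℤ)`, viewed as a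
measure on `Mat_d(ℤ)`: image of `μ^{⊗k}` under `(g₁, …, g_k) ↦ g₁ + ⋯ + g_k`. -/
noncomputable def addConvPow {d : ℕ} (μ : Measure (Matrix.SpecialLinearGroup (Fin d) ℤ))
    (k : ℕ) : Measure (Matrix (Fin d) (Fin d) ℤ) :=
  Measure.map (fun v : Fin k → Matrix.SpecialLinearGroup (Fin d) ℤ =>
    ∑ i, ((v i : Matrix (Fin d) (Fin d) ℤ))) (Measure.pi fun _ => μ)

namespace SLAux

lemma fourier_pt_add {T : ℝ} (n : ℤ) (x y : AddCircle T) :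
    fourier n (x + y) = fourier n x * fourier n y := by
  simp only [fourier_apply, smul_add, AddCircle.toCircle_add, Circle.coe_mul]

lemma fourier_pt_zero {T : ℝ} (n : ℤ) :
    fourier n (0 : AddCircle T) = 1 := by
  simp [fourier_apply]

lemma fourier_pt_sum {T : ℝ} (n : ℤ) {ι : Type*} (s : Finset ι) (y : ι → AddCircle T) :
    fourier n (∑ j ∈ s, y j) = ∏ j ∈ s, fourier n (y j) := by
  classical
  induction s using Finset.induction_on with
  | empty => simp [fourier_pt_zero]
  | insert _ _ h ih =>
      rw [Finset.sum_insert h, Finset.prod_insert h, fourier_pt_add, ih]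

lemma fourier_pt_zsmul {T : ℝ} (n m : ℤ) (x : AddCircle T) :
    fourier n (m • x) = fourier (n * m) x := by
  simp only [fourier_apply, smul_smul]

lemma fourier_sum_index {T : ℝ} {ι : Type*} (s : Finset ι) (c : ι → ℤ) (x : AddCircle T) :
    fourier (∑ i ∈ s, c i) x = ∏ i ∈ s, fourier (c i) x := by
  classical
  induction s using Finset.induction_on with
  | empty => simp
  | insert _ _ h ih =>
      rw [Finset.sum_insert h, Finset.prod_insert h, fourier_add, ih]

lemma norm_fourier {T : ℝ} (n : ℤ) (x : AddCircle T) : ‖fourier n x‖ = 1 := by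
  rw [fourier_apply]
  exact Circle.norm_coe _

variable {d : ℕ}

/-- The character on the torus. -/
noncomputable def chi (a : Fin d → ℤ) (x : Fin d → AddCircle (1 : ℝ)) : ℂ :=
  ∏ i, fourier (a i) (x i)

lemma torusFourier_chi (ν : Measure (Fin d → AddCircle (1 : ℝ))) (a : Fin d → ℤ) :
    torusFourier ν a = ∫ x, chi a x ∂ν := rfl

lemma norm_chi (a : Fin d → ℤ) (x : Fin d → AddCircle (1 : ℝ)) : ‖chi a x‖ = 1 := by
  rw [chi, norm_prod]
  simp [norm_fourier, Circle.norm_coe]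

lemma chi_continuous (a : Fin d → ℤ) : Continuous (chi a) := by
  exact continuous_finset_prod _ fun i _ =>
    (fourier (a i)).continuous.comp (continuous_apply i)

lemma conj_chi (a : Fin d → ℤ) (x : Fin d → AddCircle (1 : ℝ)) :
    conj (chi a x) = chi (-a) x := by
  rw [chi, map_prod]
  exact Finset.prod_congr rfl fun i _ => by
    rw [← fourier_neg]; rfl

lemma chi_add_index (a b : Fin d → ℤ) (x : Fin d → AddCircle (1 : ℝ)) :
    chi (a + b) x = chi a x * chi b x := by
  rw [chi, chi, chi, ← Finset.prod_mul_distrib]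
  exact Finset.prod_congr rfl fun i _ => by
    simpa using fourier_add (m := a i) (n := b i) (x := x i)

lemma chi_sum_index {ι : Type*} (s : Finset ι) (b : ι → Fin d → ℤ)
    (x : Fin d → AddCircle (1 : ℝ)) :
    chi (∑ i ∈ s, b i) x = ∏ i ∈ s, chi (b i) x := by
  classical
  induction s using Finset.induction_on with
  | empty => simp [chi]
  | insert _ _ h ih => rw [Finset.sum_insert h, Finset.prod_insert h, chi_add_index, ih]

/-- Row vector times matrix. -/
def row (a : Fin d → ℤ) (m : Matrix (Fin d) (Fin d) ℤ) : Fin d → ℤ :=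
  fun j => ∑ i, a i * m i j

lemma chi_act (a : Fin d → ℤ) (m : Matrix (Fin d) (Fin d) ℤ)
    (x : Fin d → AddCircle (1 : ℝ)) :
    chi a (fun i => ∑ j, m i j • x j) = chi (row a m) x := by
  show _ = ∏ j, fourier (∑ i, a i * m i j) (x j)
  rw [chi]
  calc ∏ i, fourier (a i) (∑ j, m i j • x j)
      = ∏ i, ∏ j, fourier (a i * m i j) (x j) := by
        refine Finset.prod_congr rfl fun i _ => ?_
        rw [fourier_pt_sum]
        exact Finset.prod_congr rfl fun j _ => fourier_pt_zsmul _ _ _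
    _ = ∏ j, ∏ i, fourier (a i * m i j) (x j) := Finset.prod_comm
    _ = ∏ j, fourier (∑ i, a i * m i j) (x j) := by
        exact Finset.prod_congr rfl fun j _ => (fourier_sum_index _ _ _).symm

lemma row_sum (a : Fin d → ℤ) {ι : Type*} (s : Finset ι) (g : ι → Matrix (Fin d) (Fin d) ℤ) :
    row a (∑ i ∈ s, g i) = ∑ i ∈ s, row a (g i) := by
  funext j
  simp only [row, Finset.sum_apply, Matrix.sum_apply, Finset.mul_sum]
  exact Finset.sum_comm

lemma row_sub (a : Fin d → ℤ) (m m' : Matrix (Fin d) (Fin d) ℤ) :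
    row a (m - m') = row a m - row a m' := by
  funext j
  simp [row, Matrix.sub_apply, mul_sub, Finset.sum_sub_distrib]

instance : Countable (Matrix (Fin d) (Fin d) ℤ) := by
  change Countable (Fin d → Fin d → ℤ); infer_instance

instance : Countable (Matrix.SpecialLinearGroup (Fin d) ℤ) := by
  change Countable {A : Matrix (Fin d) (Fin d) ℤ // A.det = 1}; infer_instance

instance : MeasurableSingletonClass (Matrix (Fin d) (Fin d) ℤ) :=
  ⟨fun _ => MeasurableSpace.measurableSet_top⟩

instance : MeasurableSingletonClass (Matrix.SpecialLinearGroup (Fin d) ℤ) :=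
  ⟨fun _ => MeasurableSpace.measurableSet_top⟩

lemma measurable_from_countable_left {α β γ : Type*} [MeasurableSpace α] [MeasurableSpace β]
    [MeasurableSpace γ] [Countable α] [MeasurableSingletonClass α] {f : α × β → γ}
    (hf : ∀ a, Measurable fun b => f (a, b)) : Measurable f := by
  have h : Measurable (fun p : β × α => f (p.2, p.1)) :=
    measurable_from_prod_countable_left fun a => hf a
  exact h.comp measurable_swap

lemma integrable_of_le_one {α : Type*} [MeasurableSpace α] {P : Measure α} [IsFiniteMeasure P]
    {f : α → ℂ} (hm : AEStronglyMeasurable f P) (hb : ∀ x, ‖f x‖ ≤ 1) : Integrable f P :=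
  (integrable_const (1 : ℝ)).mono' hm (Filter.Eventually.of_forall hb)

lemma integral_pow_eq {α : Type*} [MeasurableSpace α] (μ : Measure α) [IsProbabilityMeasure μ]
    (k : ℕ) (f : α → ℂ) :
    (∫ x, f x ∂μ) ^ k = ∫ v : Fin k → α, ∏ i, f (v i) ∂(Measure.pi fun _ => μ) := by
  letI : MeasureSpace α := ⟨μ⟩
  haveI : IsProbabilityMeasure (volume : Measure α) := ‹IsProbabilityMeasure μ›
  have h1 : (Measure.pi fun _ : Fin k => μ) = (volume : Measure (Fin k → α)) :=
    (volume_pi).symm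
  rw [MeasureTheory.integral_fintype_prod_eq_pow (ι := Fin k) f, Fintype.card_fin]

lemma norm_torusFourier (ν : Measure (Fin d → AddCircle (1 : ℝ))) [IsProbabilityMeasure ν]
    (a : Fin d → ℤ) : ‖torusFourier ν a‖ ≤ 1 := by
  rw [torusFourier_chi]
  refine (norm_integral_le_integral_norm _).trans ?_
  rw [integral_congr_ae (Filter.Eventually.of_forall fun x => norm_chi a x)]
  simp

lemma norm_integral_chi_le_one {α : Type*} [MeasurableSpace α] (P : Measure α)
    [IsProbabilityMeasure P] (b : α → Fin d → ℤ) (x : Fin d → AddCircle (1 : ℝ)) :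
    ‖∫ a, chi (b a) x ∂P‖ ≤ 1 := by
  refine (norm_integral_le_integral_norm _).trans ?_
  rw [integral_congr_ae (Filter.Eventually.of_forall fun a => norm_chi (b a) x)]
  simp

end SLAux

open SLAux

set_option maxHeartbeats 2000000 in
/-- large Fourier coefficients have additive structure; Lemma 4.3 of
He–de Saxcé. If `|(μ*ν)^(a₀)| ≥ t₀ > 0`, then for every `k ≥ 1` the set
`A = {g ∈ Mat_d(ℤ) : |ν̂(a₀ g)| ≥ t₀^{2k}/2}` has
`(μ^{⊞k} ⊟ μ^{⊞k})(A) ≥ t₀^{2k}/2`. -/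
theorem additive_structure_of_large_fourier_coefficients
    {d : ℕ} (μ : Measure (Matrix.SpecialLinearGroup (Fin d) ℤ)) [IsProbabilityMeasure μ]
    (ν : Measure (Fin d → AddCircle (1 : ℝ))) [IsProbabilityMeasure ν]
    (a₀ : Fin d → ℤ) (t₀ : ℝ) (ht₀ : 0 < t₀)
    (hbig : t₀ ≤ ‖torusFourier (actConv μ ν) a₀‖) :
    ∀ k : ℕ, 1 ≤ k →
      ENNReal.ofReal (t₀ ^ (2 * k) / 2) ≤
        (Measure.map (fun p : Matrix (Fin d) (Fin d) ℤ × Matrix (Fin d) (Fin d) ℤ =>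
            p.1 - p.2) ((addConvPow μ k).prod (addConvPow μ k)))
          {g : Matrix (Fin d) (Fin d) ℤ |
            t₀ ^ (2 * k) / 2 ≤ ‖torusFourier ν (fun j => ∑ i, a₀ i * g i j)‖} := by
  classical
  intro k hk
  set t : ℝ := t₀ ^ (2 * k) with ht_def
  have ht : 0 < t := pow_pos ht₀ _
  -- the function F x = ∫ χ_{a₀ g}(x) dμ(g)
  set F : (Fin d → AddCircle (1 : ℝ)) → ℂ :=
    fun x => ∫ g, chi (row a₀ ((g : Matrix (Fin d) (Fin d) ℤ))) x ∂μ with hF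
  have hjoint : Measurable (fun p :
      Matrix.SpecialLinearGroup (Fin d) ℤ × (Fin d → AddCircle (1 : ℝ)) =>
      chi (row a₀ ((p.1 : Matrix (Fin d) (Fin d) ℤ))) p.2) :=
    measurable_from_countable_left fun g =>
      (chi_continuous (row a₀ ((g : Matrix (Fin d) (Fin d) ℤ)))).measurable
  have hFmeas : StronglyMeasurable F := hjoint.stronglyMeasurable.integral_prod_left'
  have hF1 : ∀ x, ‖F x‖ ≤ 1 := fun x =>
    norm_integral_chi_le_one μ (fun g => row a₀ ((g : Matrix (Fin d) (Fin d) ℤ))) x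
  -- Step A : the Fourier coefficient of the action convolution
  have hH : Measurable (fun p :
      Matrix.SpecialLinearGroup (Fin d) ℤ × (Fin d → AddCircle (1 : ℝ)) =>
      (fun i => ∑ j, ((p.1 : Matrix (Fin d) (Fin d) ℤ) i j) • p.2 j :
        Fin d → AddCircle (1 : ℝ))) := by
    refine measurable_from_countable_left fun g => measurable_pi_lambda _ fun i => ?_
    have hc : Continuous fun x : Fin d → AddCircle (1 : ℝ) =>
        ∑ j, ((g : Matrix (Fin d) (Fin d) ℤ) i j) • x j :=
      continuous_finset_sum _ fun j _ => (continuous_zsmul _).comp (continuous_apply j)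
    exact hc.measurable
  have hA : torusFourier (actConv μ ν) a₀ = ∫ x, F x ∂ν := by
    have h1 : torusFourier (actConv μ ν) a₀
        = ∫ p : Matrix.SpecialLinearGroup (Fin d) ℤ × (Fin d → AddCircle (1 : ℝ)),
            chi a₀ (fun i => ∑ j, ((p.1 : Matrix (Fin d) (Fin d) ℤ) i j) • p.2 j)
            ∂(μ.prod ν) := by
      rw [torusFourier_chi, actConv,
        integral_map hH.aemeasurable (chi_continuous a₀).aestronglyMeasurable]
    have h2 : Integrable (fun p :
        Matrix.SpecialLinearGroup (Fin d) ℤ × (Fin d → AddCircle (1 : ℝ)) =>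
        chi a₀ (fun i => ∑ j, ((p.1 : Matrix (Fin d) (Fin d) ℤ) i j) • p.2 j)) (μ.prod ν) :=
      integrable_of_le_one (((chi_continuous a₀).measurable.comp hH).aestronglyMeasurable)
        (fun p => (norm_chi _ _).le)
    rw [h1, integral_prod_symm _ h2]
    refine integral_congr_ae (Filter.Eventually.of_forall fun x => ?_)
    refine integral_congr_ae (Filter.Eventually.of_forall fun g => ?_)
    exact chi_act _ _ _
  have hInt1 : t₀ ≤ ∫ x, ‖F x‖ ∂ν := by
    calc t₀ ≤ ‖torusFourier (actConv μ ν) a₀‖ := hbig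
    _ = ‖∫ x, F x ∂ν‖ := by rw [hA]
    _ ≤ ∫ x, ‖F x‖ ∂ν := norm_integral_le_integral_norm _
  have hFn_int : Integrable (fun x => ‖F x‖) ν :=
    (integrable_const (1 : ℝ)).mono' hFmeas.norm.aestronglyMeasurable
      (Filter.Eventually.of_forall fun x => by rw [norm_norm]; exact hF1 x)
  have hFpow_int : Integrable (fun x => ‖F x‖ ^ (2 * k)) ν := by
    refine (integrable_const (1 : ℝ)).mono'
      ((hFmeas.measurable.norm.pow_const _).aestronglyMeasurable)
      (Filter.Eventually.of_forall fun x => ?_)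
    rw [Real.norm_eq_abs, abs_of_nonneg (by positivity)]
    exact pow_le_one₀ (norm_nonneg _) (hF1 x)
  -- Jensen's inequality
  have hJ : (∫ x, ‖F x‖ ∂ν) ^ (2 * k) ≤ ∫ x, ‖F x‖ ^ (2 * k) ∂ν := by
    haveI : NeZero ν := ⟨IsProbabilityMeasure.ne_zero ν⟩
    have hconv : ConvexOn ℝ Set.univ fun y : ℝ => y ^ (2 * k) := (even_two_mul k).convexOn_pow
    have h := hconv.map_average_le (continuous_pow _).continuousOn isClosed_univ
      (Filter.Eventually.of_forall fun x => Set.mem_univ _) hFn_int hFpow_int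
    simpa [average_eq_integral] using h
  have hD : t ≤ ∫ x, ‖F x‖ ^ (2 * k) ∂ν :=
    le_trans (pow_le_pow_left₀ ht₀.le hInt1 _) hJ
  -- the product measures
  set P : Measure (Fin k → Matrix.SpecialLinearGroup (Fin d) ℤ) :=
    Measure.pi fun _ => μ with hP
  haveI : IsProbabilityMeasure P := by rw [hP]; infer_instance
  set S : (Fin k → Matrix.SpecialLinearGroup (Fin d) ℤ) → Matrix (Fin d) (Fin d) ℤ :=
    fun v => ∑ i, ((v i : Matrix (Fin d) (Fin d) ℤ)) with hSdef
  have hSm : Measurable S := measurable_of_countable _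
  set lam : Measure (Matrix (Fin d) (Fin d) ℤ) :=
    Measure.map (fun p : Matrix (Fin d) (Fin d) ℤ × Matrix (Fin d) (Fin d) ℤ =>
      p.1 - p.2) ((addConvPow μ k).prod (addConvPow μ k)) with hlamdef
  have hlam : lam = Measure.map
      (fun q : (Fin k → Matrix.SpecialLinearGroup (Fin d) ℤ) ×
          (Fin k → Matrix.SpecialLinearGroup (Fin d) ℤ) => S q.1 - S q.2) (P.prod P) := by
    rw [hlamdef, addConvPow, Measure.map_prod_map _ _ hSm hSm,
      Measure.map_map (measurable_of_countable _) (Measurable.prodMap hSm hSm)]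
    rfl
  haveI : IsProbabilityMeasure lam := by
    rw [hlam]; exact Measure.isProbabilityMeasure_map (measurable_of_countable _).aemeasurable
  -- key identity
  have hpt : ∀ x, ((‖F x‖ : ℂ)) ^ (2 * k)
      = ∫ q, chi (row a₀ (S q.1 - S q.2)) x ∂(P.prod P) := by
    intro x
    have h1 : (F x) ^ k
        = ∫ v, ∏ i, chi (row a₀ ((v i : Matrix (Fin d) (Fin d) ℤ))) x ∂P :=
      integral_pow_eq μ k _
    have h2 : (conj (F x)) ^ k
        = ∫ v, ∏ i, chi (-(row a₀ ((v i : Matrix (Fin d) (Fin d) ℤ)))) x ∂P := by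
      have hc : conj (F x)
          = ∫ g, chi (-(row a₀ ((g : Matrix (Fin d) (Fin d) ℤ)))) x ∂μ := by
        rw [hF, ← integral_conj]
        exact integral_congr_ae (Filter.Eventually.of_forall fun g => conj_chi _ _)
      rw [hc]
      exact integral_pow_eq μ k _
    have h3 : (F x) ^ k * (conj (F x)) ^ k
        = ∫ q, chi (row a₀ (S q.1 - S q.2)) x ∂(P.prod P) := by
      rw [h1, h2, ← integral_prod_mul]
      refine integral_congr_ae (Filter.Eventually.of_forall fun q => ?_)
      show (∏ i : Fin k, chi (row a₀ ((q.1 i : Matrix (Fin d) (Fin d) ℤ))) x) *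
          (∏ i : Fin k, chi (-(row a₀ ((q.2 i : Matrix (Fin d) (Fin d) ℤ)))) x)
          = chi (row a₀ (S q.1 - S q.2)) x
      have hrow : row a₀ (S q.1 - S q.2)
          = (∑ i : Fin k, row a₀ ((q.1 i : Matrix (Fin d) (Fin d) ℤ)))
            + ∑ i : Fin k, -(row a₀ ((q.2 i : Matrix (Fin d) (Fin d) ℤ))) := by
        simp only [hSdef]
        rw [row_sub, row_sum, row_sum, sub_eq_add_neg, ← Finset.sum_neg_distrib]
      rw [hrow, chi_add_index, chi_sum_index, chi_sum_index]
    have h4 : (F x) ^ k * (conj (F x)) ^ k = ((‖F x‖ : ℂ)) ^ (2 * k) := by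
      rw [← mul_pow, Complex.mul_conj, Complex.normSq_eq_norm_sq]
      push_cast
      rw [← pow_mul]
    rw [← h4, h3]
  have hqmeas : Measurable (fun q : (Fin k → Matrix.SpecialLinearGroup (Fin d) ℤ) ×
      (Fin k → Matrix.SpecialLinearGroup (Fin d) ℤ) => S q.1 - S q.2) :=
    measurable_of_countable _
  have hE : ∫ x, ‖F x‖ ^ (2 * k) ∂ν
      = (∫ q, torusFourier ν (row a₀ (S q.1 - S q.2)) ∂(P.prod P)).re := by
    have hjm : Measurable (fun p : ((Fin k → Matrix.SpecialLinearGroup (Fin d) ℤ) ×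
        (Fin k → Matrix.SpecialLinearGroup (Fin d) ℤ)) × (Fin d → AddCircle (1 : ℝ)) =>
        chi (row a₀ (S p.1.1 - S p.1.2)) p.2) :=
      measurable_from_countable_left fun q =>
        (chi_continuous (row a₀ (S q.1 - S q.2))).measurable
    have hxint : Integrable (fun x => ∫ q, chi (row a₀ (S q.1 - S q.2)) x ∂(P.prod P)) ν := by
      refine integrable_of_le_one
        (hjm.stronglyMeasurable.integral_prod_left'.aestronglyMeasurable) (fun x => ?_)
      exact norm_integral_chi_le_one (P.prod P) (fun q => row a₀ (S q.1 - S q.2)) x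
    have hswap : ∫ x, (∫ q, chi (row a₀ (S q.1 - S q.2)) x ∂(P.prod P)) ∂ν
        = ∫ q, (∫ x, chi (row a₀ (S q.1 - S q.2)) x ∂ν) ∂(P.prod P) := by
      refine integral_integral_swap ?_
      refine integrable_of_le_one ?_ (fun p => (norm_chi _ _).le)
      exact (measurable_from_prod_countable_left fun q =>
        (chi_continuous (row a₀ (S q.1 - S q.2))).measurable).aestronglyMeasurable
    calc ∫ x, ‖F x‖ ^ (2 * k) ∂ν
        = ∫ x, (∫ q, chi (row a₀ (S q.1 - S q.2)) x ∂(P.prod P)).re ∂ν := by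
          refine integral_congr_ae (Filter.Eventually.of_forall fun x => ?_)
          show ‖F x‖ ^ (2 * k)
              = (∫ q, chi (row a₀ (S q.1 - S q.2)) x ∂(P.prod P)).re
          rw [← hpt x, ← Complex.ofReal_pow, Complex.ofReal_re]
      _ = (∫ x, (∫ q, chi (row a₀ (S q.1 - S q.2)) x ∂(P.prod P)) ∂ν).re :=
          integral_re hxint
      _ = (∫ q, (∫ x, chi (row a₀ (S q.1 - S q.2)) x ∂ν) ∂(P.prod P)).re :=
          congrArg Complex.re hswap
      _ = (∫ q, torusFourier ν (row a₀ (S q.1 - S q.2)) ∂(P.prod P)).re := rfl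
  have hmapint : ∫ g, torusFourier ν (row a₀ g) ∂lam
      = ∫ q, torusFourier ν (row a₀ (S q.1 - S q.2)) ∂(P.prod P) := by
    rw [hlam, integral_map hqmeas.aemeasurable
      (measurable_of_countable _).aestronglyMeasurable]
  have hI1 : t ≤ ∫ g, ‖torusFourier ν (row a₀ g)‖ ∂lam := by
    calc t ≤ ∫ x, ‖F x‖ ^ (2 * k) ∂ν := hD
    _ = (∫ g, torusFourier ν (row a₀ g) ∂lam).re := by rw [hE, hmapint]
    _ ≤ ‖∫ g, torusFourier ν (row a₀ g) ∂lam‖ :=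
        Complex.re_le_norm _
    _ ≤ ∫ g, ‖torusFourier ν (row a₀ g)‖ ∂lam := norm_integral_le_integral_norm _
  -- conclusion
  set A : Set (Matrix (Fin d) (Fin d) ℤ) :=
    {g | t / 2 ≤ ‖torusFourier ν (fun j => ∑ i, a₀ i * g i j)‖} with hAdef
  have hAset : A = {g | t / 2 ≤ ‖torusFourier ν (row a₀ g)‖} := rfl
  have hAmeas : MeasurableSet A := MeasurableSpace.measurableSet_top
  have hnorm_int : Integrable (fun g => ‖torusFourier ν (row a₀ g)‖) lam := by
    refine (integrable_const (1 : ℝ)).mono'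
      (measurable_of_countable _).aestronglyMeasurable
      (Filter.Eventually.of_forall fun g => ?_)
    rw [norm_norm]; exact norm_torusFourier ν _
  have hsplit : ∫ g, ‖torusFourier ν (row a₀ g)‖ ∂lam
      = (∫ g in A, ‖torusFourier ν (row a₀ g)‖ ∂lam)
        + ∫ g in Aᶜ, ‖torusFourier ν (row a₀ g)‖ ∂lam :=
    (integral_add_compl hAmeas hnorm_int).symm
  have honA : ∫ g in A, ‖torusFourier ν (row a₀ g)‖ ∂lam ≤ (lam A).toReal := by
    have h := norm_setIntegral_le_of_norm_le_const (μ := lam) (s := A)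
      (f := fun g => ‖torusFourier ν (row a₀ g)‖) (C := 1) (measure_lt_top lam A)
      (fun g _ => by rw [norm_norm]; exact norm_torusFourier ν _)
    calc ∫ g in A, ‖torusFourier ν (row a₀ g)‖ ∂lam
        ≤ ‖∫ g in A, ‖torusFourier ν (row a₀ g)‖ ∂lam‖ := le_abs_self _
      _ ≤ 1 * (lam A).toReal := h
      _ = (lam A).toReal := one_mul _
  have honAc : ∫ g in Aᶜ, ‖torusFourier ν (row a₀ g)‖ ∂lam ≤ t / 2 := by
    have h := norm_setIntegral_le_of_norm_le_const (μ := lam) (s := Aᶜ)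
      (f := fun g => ‖torusFourier ν (row a₀ g)‖) (C := t / 2) (measure_lt_top lam Aᶜ)
      (fun g hg => by
        rw [norm_norm]
        have hg' : ¬ t / 2 ≤ ‖torusFourier ν (row a₀ g)‖ := hg
        exact (not_le.mp hg').le)
    calc ∫ g in Aᶜ, ‖torusFourier ν (row a₀ g)‖ ∂lam
        ≤ ‖∫ g in Aᶜ, ‖torusFourier ν (row a₀ g)‖ ∂lam‖ := le_abs_self _
      _ ≤ t / 2 * (lam Aᶜ).toReal := h
      _ ≤ t / 2 * 1 := by
          refine mul_le_mul_of_nonneg_left ?_ (by positivity)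
          exact ENNReal.toReal_le_of_le_ofReal zero_le_one (by simpa using prob_le_one)
      _ = t / 2 := mul_one _
  have hfinal : t / 2 ≤ (lam A).toReal := by
    have : t ≤ (lam A).toReal + t / 2 := by
      calc t ≤ ∫ g, ‖torusFourier ν (row a₀ g)‖ ∂lam := hI1
      _ = _ := hsplit
      _ ≤ (lam A).toReal + t / 2 := add_le_add honA honAc
    linarith
  show ENNReal.ofReal (t / 2) ≤ lam A
  exact ENNReal.ofReal_le_of_le_toReal hfinal
end

section
/- Let V be a finite-dimensional real vector space, A ⊆ V × V' a set (V' another space), φ : V × V' → W a map to a Euclidean space W, and δ > 0. Define the energy E_δ(φ, A) as the covering number at scale δ of {(a,a') ∈ A × A : ‖φ(a) − φ(a')‖ ≤ δ}. Then the covering number of the image satisfies N(φ(A), δ) ≥ N(A,δ)² / E_δ(φ, A) (up to a constant depending only on dimensions). In particular, for A = A_1 × A_1 and φ(x,y) = x + f y with f linear, N(A_1 + f A_1, δ) ≥ c·N(A_1, δ)⁴ / E_δ(φ, A_1 × A_1). -/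
/-- Covering number of `A` at scale `δ`: minimal number of closed `δ`-balls covering `A`. -/
noncomputable def covN {X : Type*} [PseudoMetricSpace X] (A : Set X) (δ : ℝ) : ℕ :=
  sInf {n : ℕ | ∃ F : Finset X, F.card = n ∧ A ⊆ ⋃ x ∈ F, Metric.closedBall x δ}

open Metric Set Bornology Module MeasureTheory
open scoped ENNReal

lemma covN_le_card {X : Type*} [PseudoMetricSpace X] {A : Set X} {δ : ℝ} {F : Finset X}
    (h : A ⊆ ⋃ x ∈ F, closedBall x δ) : covN A δ ≤ F.card :=
  Nat.sInf_le ⟨F, rfl, h⟩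

section V
variable {V : Type*} [NormedAddCommGroup V] [NormedSpace ℝ V] [FiniteDimensional ℝ V]

/-- Packing: a `(>δ)`-separated subset of a ball of radius `2δ` has at most `5 ^ dim` points. -/
lemma packing_card_le {δ : ℝ} (hδ : 0 < δ) (x : V) (P : Finset V)
    (hPb : ∀ p ∈ P, p ∈ closedBall x (2 * δ))
    (hsep : ∀ p ∈ P, ∀ q ∈ P, p ≠ q → δ < dist p q) :
    P.card ≤ 5 ^ finrank ℝ V := by
  borelize V
  set d := finrank ℝ V with hd
  set μ : Measure V := MeasureTheory.Measure.addHaar with hμ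
  set B : ℝ≥0∞ := μ (ball (0 : V) 1) with hB
  have hB0 : B ≠ 0 := (measure_ball_pos μ 0 one_pos).ne'
  have hBt : B ≠ ⊤ := measure_ball_lt_top.ne
  have hdisj : (↑P : Set V).PairwiseDisjoint (fun p => closedBall p (δ / 2)) := by
    intro p hp q hq hne
    exact closedBall_disjoint_closedBall (by
      have := hsep p (by exact_mod_cast hp) q (by exact_mod_cast hq) hne
      linarith)
  have hm : ∀ p ∈ P, MeasurableSet (closedBall p (δ / 2)) :=
    fun p _ => measurableSet_closedBall
  have key : (P.card : ℝ≥0∞) * (ENNReal.ofReal ((δ / 2) ^ d) * B)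
      ≤ ENNReal.ofReal ((5 * (δ / 2)) ^ d) * B := by
    calc (P.card : ℝ≥0∞) * (ENNReal.ofReal ((δ / 2) ^ d) * B)
        = ∑ p ∈ P, ENNReal.ofReal ((δ / 2) ^ d) * B := by
          rw [Finset.sum_const, nsmul_eq_mul]
      _ = ∑ p ∈ P, μ (closedBall p (δ / 2)) := by
          refine Finset.sum_congr rfl fun p _ => ?_
          rw [Measure.addHaar_closedBall μ p (by positivity)]
      _ = μ (⋃ p ∈ P, closedBall p (δ / 2)) :=
          (measure_biUnion_finset hdisj hm).symm
      _ ≤ μ (closedBall x (5 * (δ / 2))) := by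
          refine measure_mono (iUnion₂_subset fun p hp => ?_)
          refine closedBall_subset_closedBall' ?_
          have := hPb p hp
          rw [mem_closedBall] at this
          linarith
      _ = ENNReal.ofReal ((5 * (δ / 2)) ^ d) * B :=
          Measure.addHaar_closedBall μ x (by positivity)
  have key2 : (P.card : ℝ≥0∞) * ENNReal.ofReal ((δ / 2) ^ d)
      ≤ ENNReal.ofReal ((5 : ℝ) ^ d) * ENNReal.ofReal ((δ / 2) ^ d) := by
    rw [← ENNReal.mul_le_mul_iff_left hB0 hBt]
    calc (P.card : ℝ≥0∞) * ENNReal.ofReal ((δ / 2) ^ d) * B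
        = (P.card : ℝ≥0∞) * (ENNReal.ofReal ((δ / 2) ^ d) * B) := by ring
      _ ≤ ENNReal.ofReal ((5 * (δ / 2)) ^ d) * B := key
      _ = ENNReal.ofReal ((5 : ℝ) ^ d) * ENNReal.ofReal ((δ / 2) ^ d) * B := by
          rw [mul_pow, ENNReal.ofReal_mul (by positivity)]
  have key3 : (P.card : ℝ≥0∞) ≤ ENNReal.ofReal ((5 : ℝ) ^ d) := by
    have h0 : ENNReal.ofReal ((δ / 2) ^ d) ≠ 0 := by
      simp only [ne_eq, ENNReal.ofReal_eq_zero, not_le]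
      positivity
    exact (ENNReal.mul_le_mul_iff_left h0 ENNReal.ofReal_ne_top).mp key2
  have : ((P.card : ℕ) : ℝ≥0∞) ≤ ((5 ^ d : ℕ) : ℝ≥0∞) := by
    refine key3.trans_eq ?_
    rw [ENNReal.ofReal_pow (by norm_num)]
    norm_num
  exact_mod_cast this

/-- Existence of a maximal `(>r)`-separated net in a bounded set. -/
lemma exists_net {A : Set V} (hA : IsBounded A) {r : ℝ} (hr : 0 < r) :
    ∃ P : Finset V, ↑P ⊆ A ∧ (∀ p ∈ P, ∀ q ∈ P, p ≠ q → r < dist p q) ∧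
      A ⊆ ⋃ p ∈ P, closedBall p r := by
  classical
  have htb : TotallyBounded A :=
    hA.isCompact_closure.totallyBounded.subset subset_closure
  obtain ⟨t, htfin, htcov⟩ := (Metric.totallyBounded_iff.mp htb) (r / 2) (by positivity)
  set T := htfin.toFinset with hT
  -- every separated subset of A has card at most T.card
  have hbdd : ∀ P : Finset V, ↑P ⊆ A →
      (∀ p ∈ P, ∀ q ∈ P, p ≠ q → r < dist p q) → P.card ≤ T.card := by
    intro P hPA hPsep
    by_contra hlt
    push_neg at hlt
    have hmaps : ∀ p ∈ P, (fun v => if h : ∃ c ∈ T, dist v c < r / 2 then h.choose else v) p ∈ T := by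
      intro p hp
      have : p ∈ ⋃ y ∈ t, ball y (r / 2) := htcov (hPA hp)
      rw [mem_iUnion₂] at this
      obtain ⟨c, hc, hpc⟩ := this
      have hex : ∃ c ∈ T, dist p c < r / 2 := ⟨c, by simp [hT, hc], by simpa using hpc⟩
      simp only [dif_pos hex]
      exact hex.choose_spec.1
    obtain ⟨p, hp, q, hq, hne, heq⟩ := Finset.exists_ne_map_eq_of_card_lt_of_maps_to hlt hmaps
    have hexp : ∃ c ∈ T, dist p c < r / 2 := by
      have : p ∈ ⋃ y ∈ t, ball y (r / 2) := htcov (hPA hp)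
      rw [mem_iUnion₂] at this
      obtain ⟨c, hc, hpc⟩ := this
      exact ⟨c, by simp [hT, hc], by simpa using hpc⟩
    have hexq : ∃ c ∈ T, dist q c < r / 2 := by
      have : q ∈ ⋃ y ∈ t, ball y (r / 2) := htcov (hPA hq)
      rw [mem_iUnion₂] at this
      obtain ⟨c, hc, hqc⟩ := this
      exact ⟨c, by simp [hT, hc], by simpa using hqc⟩
    rw [dif_pos hexp, dif_pos hexq] at heq
    have h1 : dist p hexp.choose < r / 2 := hexp.choose_spec.2
    have h2 : dist q hexq.choose < r / 2 := hexq.choose_spec.2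
    have : dist p q < r := by
      calc dist p q ≤ dist p hexp.choose + dist hexq.choose q := by
            rw [heq]; exact dist_triangle _ _ _
        _ < r / 2 + r / 2 := by rw [dist_comm hexq.choose q]; exact add_lt_add h1 h2
        _ = r := by ring
    exact absurd (hPsep p hp q hq hne) (not_lt.mpr this.le)
  set S : Set ℕ := {n | ∃ P : Finset V, ↑P ⊆ A ∧
    (∀ p ∈ P, ∀ q ∈ P, p ≠ q → r < dist p q) ∧ P.card = n} with hS
  have hSne : S.Nonempty := ⟨0, ∅, by simp, by simp, rfl⟩
  have hSbdd : BddAbove S := by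
    refine ⟨T.card, fun n hn => ?_⟩
    obtain ⟨P, h1, h2, h3⟩ := hn
    exact h3 ▸ hbdd P h1 h2
  obtain ⟨P, hPA, hPsep, hPcard⟩ := Nat.sSup_mem hSne hSbdd
  refine ⟨P, hPA, hPsep, fun a ha => ?_⟩
  by_contra hcov
  rw [mem_iUnion₂] at hcov
  push_neg at hcov
  have haP : a ∉ P := by
    intro h
    have := hcov a h
    simp [hr.le] at this
  have hsep' : ∀ p ∈ insert a P, ∀ q ∈ insert a P, p ≠ q → r < dist p q := by
    intro p hp q hq hne
    rcases Finset.mem_insert.mp hp with rfl | hp' <;>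
      rcases Finset.mem_insert.mp hq with rfl | hq'
    · exact absurd rfl hne
    · have := hcov q hq'
      rw [mem_closedBall] at this
      push_neg at this
      exact this
    · have := hcov p hp'
      rw [mem_closedBall] at this
      push_neg at this
      rwa [dist_comm] at this
    · exact hPsep p hp' q hq' hne
  have hmem : P.card + 1 ∈ S := by
    refine ⟨insert a P, ?_, hsep', by rw [Finset.card_insert_of_notMem haP]⟩
    rw [Finset.coe_insert]
    exact Set.insert_subset ha hPA
  have := le_csSup hSbdd hmem
  omega

/-- A ball of radius `2δ` admits a `δ`-net of at most `5 ^ dim` points. -/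
lemma ball_net (x : V) {δ : ℝ} (hδ : 0 < δ) :
    ∃ Q : Finset V, closedBall x (2 * δ) ⊆ ⋃ q ∈ Q, closedBall q δ ∧
      Q.card ≤ 5 ^ finrank ℝ V := by
  obtain ⟨Q, hQsub, hQsep, hQcov⟩ := exists_net (isBounded_closedBall (x := x) (r := 2 * δ)) hδ
  exact ⟨Q, hQcov, packing_card_le hδ x Q (fun p hp => hQsub hp) hQsep⟩

/-- A bounded set has a separated net `P` with `covN A δ ≤ 5 ^ dim * P.card`. -/
lemma exists_net_covN {A : Set V} (hA : IsBounded A) {δ : ℝ} (hδ : 0 < δ) :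
    ∃ P : Finset V, ↑P ⊆ A ∧ (∀ p ∈ P, ∀ q ∈ P, p ≠ q → 2 * δ < dist p q) ∧
      covN A δ ≤ 5 ^ finrank ℝ V * P.card := by
  classical
  obtain ⟨P, hPA, hPsep, hPcov⟩ := exists_net hA (r := 2 * δ) (by positivity)
  choose Q hQcov hQcard using fun p : V => ball_net p hδ
  refine ⟨P, hPA, hPsep, ?_⟩
  have hcov : A ⊆ ⋃ x ∈ P.biUnion Q, closedBall x δ := by
    intro a ha
    obtain ⟨p, hp, hap⟩ := mem_iUnion₂.mp (hPcov ha)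
    obtain ⟨q, hq, haq⟩ := mem_iUnion₂.mp (hQcov p hap)
    exact mem_iUnion₂.mpr ⟨q, Finset.mem_biUnion.mpr ⟨p, hp, hq⟩, haq⟩
  calc covN A δ ≤ (P.biUnion Q).card := covN_le_card hcov
    _ ≤ ∑ p ∈ P, (Q p).card := Finset.card_biUnion_le
    _ ≤ ∑ p ∈ P, 5 ^ finrank ℝ V := Finset.sum_le_sum fun p _ => hQcard p
    _ = 5 ^ finrank ℝ V * P.card := by rw [Finset.sum_const, smul_eq_mul, mul_comm]

end V

/-- A `(>2δ)`-separated subset of `S` has cardinality at most any covering count of `S`. -/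
lemma sep_card_le_covN {X : Type*} [MetricSpace X] {S : Set X} {δ : ℝ} (hδ : 0 < δ)
    {Q : Finset X} (hQS : ↑Q ⊆ S)
    (hsep : ∀ p ∈ Q, ∀ q ∈ Q, p ≠ q → 2 * δ < dist p q)
    (hne : ∃ F : Finset X, S ⊆ ⋃ x ∈ F, closedBall x δ) :
    Q.card ≤ covN S δ := by
  obtain ⟨F₀, hF₀⟩ := hne
  have hmem : covN S δ ∈ {n : ℕ | ∃ F : Finset X, F.card = n ∧ S ⊆ ⋃ x ∈ F, closedBall x δ} :=
    Nat.sInf_mem ⟨F₀.card, F₀, rfl, hF₀⟩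
  obtain ⟨F, hFcard, hFcov⟩ := hmem
  rw [← hFcard]
  by_contra hlt
  push_neg at hlt
  have hmaps : ∀ q ∈ Q, (fun v => if h : ∃ c ∈ F, dist v c ≤ δ then h.choose else v) q ∈ F := by
    intro q hq
    obtain ⟨c, hc, hqc⟩ := mem_iUnion₂.mp (hFcov (hQS hq))
    have hex : ∃ c ∈ F, dist q c ≤ δ := ⟨c, hc, by simpa using hqc⟩
    simp only [dif_pos hex]
    exact hex.choose_spec.1
  obtain ⟨p, hp, q, hq, hpq, heq⟩ := Finset.exists_ne_map_eq_of_card_lt_of_maps_to hlt hmaps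
  have hexp : ∃ c ∈ F, dist p c ≤ δ := by
    obtain ⟨c, hc, hpc⟩ := mem_iUnion₂.mp (hFcov (hQS hp)); exact ⟨c, hc, by simpa using hpc⟩
  have hexq : ∃ c ∈ F, dist q c ≤ δ := by
    obtain ⟨c, hc, hqc⟩ := mem_iUnion₂.mp (hFcov (hQS hq)); exact ⟨c, hc, by simpa using hqc⟩
  rw [dif_pos hexp, dif_pos hexq] at heq
  have : dist p q ≤ 2 * δ := by
    calc dist p q ≤ dist p hexp.choose + dist hexq.choose q := by
          rw [heq]; exact dist_triangle _ _ _
      _ ≤ δ + δ := add_le_add hexp.choose_spec.2 (dist_comm hexq.choose q ▸ hexq.choose_spec.2)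
      _ = 2 * δ := by ring
  exact absurd (hsep p hp q hq hpq) (not_lt.mpr this)

/-- Main counting lemma: energy bounds covering numbers of images (ℕ version). -/
lemma main_energy {V V' W : Type*}
    [NormedAddCommGroup V] [NormedSpace ℝ V] [FiniteDimensional ℝ V]
    [NormedAddCommGroup V'] [NormedSpace ℝ V'] [FiniteDimensional ℝ V']
    [NormedAddCommGroup W] [NormedSpace ℝ W] [FiniteDimensional ℝ W]
    (φ : V × V' → W) (A : Set (V × V')) {δ : ℝ} (hδ : 0 < δ)
    (hA : IsBounded A) (hφA : IsBounded (φ '' A)) :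
    covN A δ ^ 2 ≤ 5 ^ (2 * finrank ℝ (V × V') + finrank ℝ W) *
      covN {p : (V × V') × (V × V') | p.1 ∈ A ∧ p.2 ∈ A ∧ dist (φ p.1) (φ p.2) ≤ δ} δ *
      covN (φ '' A) δ := by
  classical
  set dP := finrank ℝ (V × V') with hdP
  set dW := finrank ℝ W with hdW
  set S := {p : (V × V') × (V × V') | p.1 ∈ A ∧ p.2 ∈ A ∧ dist (φ p.1) (φ p.2) ≤ δ} with hSdef
  set E := covN S δ with hE
  set M := covN (φ '' A) δ with hM
  obtain ⟨P, hPA, hPsep, hPN⟩ := exists_net_covN hA hδ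
  -- a cover of φ '' A with exactly M balls of radius δ
  have hcovset : M ∈ {n : ℕ | ∃ F : Finset W, F.card = n ∧
      φ '' A ⊆ ⋃ x ∈ F, closedBall x δ} := by
    obtain ⟨F₀, -, -, hcov⟩ := exists_net hφA hδ
    exact Nat.sInf_mem ⟨F₀.card, F₀, rfl, hcov⟩
  obtain ⟨F, hFcard, hFcov⟩ := hcovset
  -- refine it to scale δ/2
  have hδ2 : (0 : ℝ) < δ / 2 := by positivity
  choose Qb hQbcov hQbcard using fun w : W => ball_net w hδ2
  set G := F.biUnion Qb with hG
  have hGcard : G.card ≤ 5 ^ dW * M := by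
    calc G.card ≤ ∑ w ∈ F, (Qb w).card := Finset.card_biUnion_le
      _ ≤ ∑ w ∈ F, 5 ^ dW := Finset.sum_le_sum fun w _ => hQbcard w
      _ = 5 ^ dW * M := by rw [Finset.sum_const, smul_eq_mul, hFcard, mul_comm]
  have hGcov : φ '' A ⊆ ⋃ c ∈ G, closedBall c (δ / 2) := by
    intro a ha
    obtain ⟨w, hw, haw⟩ := mem_iUnion₂.mp (hFcov ha)
    have h2 : (2 : ℝ) * (δ / 2) = δ := by ring
    have : a ∈ closedBall w (2 * (δ / 2)) := by rwa [h2]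
    obtain ⟨c, hc, hac⟩ := mem_iUnion₂.mp (hQbcov w this)
    exact mem_iUnion₂.mpr ⟨c, Finset.mem_biUnion.mpr ⟨w, hw, hc⟩, hac⟩
  -- assign fibers
  set g : V × V' → W := fun p =>
    if h : ∃ c ∈ G, dist (φ p) c ≤ δ / 2 then h.choose else φ p with hgdef
  have hg : ∀ p ∈ P, g p ∈ G ∧ dist (φ p) (g p) ≤ δ / 2 := by
    intro p hp
    have hmem : φ p ∈ φ '' A := ⟨p, hPA hp, rfl⟩
    obtain ⟨c, hc, hdc⟩ := mem_iUnion₂.mp (hGcov hmem)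
    have hex : ∃ c ∈ G, dist (φ p) c ≤ δ / 2 := ⟨c, hc, by simpa using hdc⟩
    simp only [hgdef, dif_pos hex]
    exact hex.choose_spec
  set fib : W → Finset (V × V') := fun c => P.filter (fun p => g p = c) with hfib
  set Q2 := G.biUnion (fun c => fib c ×ˢ fib c) with hQ2
  have hmemQ2 : ∀ x ∈ Q2, x.1 ∈ P ∧ x.2 ∈ P ∧ g x.1 = g x.2 := by
    intro x hx
    obtain ⟨c, hc, hx2⟩ := Finset.mem_biUnion.mp hx
    rw [Finset.mem_product] at hx2
    obtain ⟨h1, h2⟩ := hx2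
    rw [Finset.mem_filter] at h1 h2
    exact ⟨h1.1, h2.1, h1.2.trans h2.2.symm⟩
  have hQ2card : Q2.card = ∑ c ∈ G, (fib c).card ^ 2 := by
    rw [Finset.card_biUnion]
    · exact Finset.sum_congr rfl fun c _ => by rw [Finset.card_product, sq]
    · intro c hc c' hc' hne
      rw [Function.onFun, Finset.disjoint_left]
      intro x hx hx'
      rw [Finset.mem_product] at hx hx'
      have h1 := (Finset.mem_filter.mp hx.1).2
      have h2 := (Finset.mem_filter.mp hx'.1).2
      exact hne (h1.symm.trans h2)
  have hsum : ∑ c ∈ G, (fib c).card = P.card :=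
    (Finset.card_eq_sum_card_fiberwise (fun p hp => (hg p hp).1)).symm
  have hQ2S : ↑Q2 ⊆ S := by
    intro x hx
    obtain ⟨h1, h2, h3⟩ := hmemQ2 x hx
    refine ⟨hPA h1, hPA h2, ?_⟩
    calc dist (φ x.1) (φ x.2) ≤ dist (φ x.1) (g x.1) + dist (g x.1) (φ x.2) :=
          dist_triangle _ _ _
      _ ≤ δ / 2 + δ / 2 := by
          refine add_le_add (hg x.1 h1).2 ?_
          rw [h3, dist_comm]
          exact (hg x.2 h2).2
      _ = δ := by ring
  have hQ2sep : ∀ p ∈ Q2, ∀ q ∈ Q2, p ≠ q → 2 * δ < dist p q := by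
    intro p hp q hq hne
    obtain ⟨hp1, hp2, -⟩ := hmemQ2 p hp
    obtain ⟨hq1, hq2, -⟩ := hmemQ2 q hq
    rw [Prod.dist_eq]
    rcases (not_and_or.mp (fun h : p.1 = q.1 ∧ p.2 = q.2 => hne (Prod.ext h.1 h.2))) with h | h
    · exact lt_of_lt_of_le (hPsep p.1 hp1 q.1 hq1 h) (le_max_left _ _)
    · exact lt_of_lt_of_le (hPsep p.2 hp2 q.2 hq2 h) (le_max_right _ _)
  have hSsub : S ⊆ A ×ˢ A := fun x hx => ⟨hx.1, hx.2.1⟩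
  have hScov : ∃ F : Finset ((V × V') × (V × V')), S ⊆ ⋃ x ∈ F, closedBall x δ := by
    obtain ⟨F₀, -, -, hcov⟩ := exists_net ((hA.prod hA).subset hSsub) hδ
    exact ⟨F₀, hcov⟩
  have hQ2E : Q2.card ≤ E := sep_card_le_covN hδ hQ2S hQ2sep hScov
  have hCS : P.card ^ 2 ≤ G.card * Q2.card := by
    rw [← hsum, hQ2card]
    exact sq_sum_le_card_mul_sum_sq
  calc covN A δ ^ 2 ≤ (5 ^ dP * P.card) ^ 2 := Nat.pow_le_pow_left hPN 2
    _ = 5 ^ (2 * dP) * P.card ^ 2 := by ring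
    _ ≤ 5 ^ (2 * dP) * (G.card * Q2.card) := Nat.mul_le_mul_left _ hCS
    _ ≤ 5 ^ (2 * dP) * ((5 ^ dW * M) * E) :=
        Nat.mul_le_mul_left _ (Nat.mul_le_mul hGcard hQ2E)
    _ = 5 ^ (2 * dP + dW) * E * M := by ring

/-- Covering number of a product is at least the square of the covering number. -/
lemma covN_sq_le_prod {V : Type*} [NormedAddCommGroup V] [NormedSpace ℝ V]
    [FiniteDimensional ℝ V] {A₁ : Set V} (hA : IsBounded A₁) {δ : ℝ} (hδ : 0 < δ) :
    covN A₁ δ ^ 2 ≤ 5 ^ (2 * finrank ℝ V) * covN (A₁ ×ˢ A₁) δ := by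
  obtain ⟨P, hPA, hPsep, hPN⟩ := exists_net_covN hA hδ
  have hsub : ↑(P ×ˢ P) ⊆ A₁ ×ˢ A₁ := by
    rw [Finset.coe_product]
    exact Set.prod_mono hPA hPA
  have hsep2 : ∀ p ∈ P ×ˢ P, ∀ q ∈ P ×ˢ P, p ≠ q → 2 * δ < dist p q := by
    intro p hp q hq hne
    rw [Finset.mem_product] at hp hq
    rw [Prod.dist_eq]
    rcases (not_and_or.mp (fun h : p.1 = q.1 ∧ p.2 = q.2 => hne (Prod.ext h.1 h.2))) with h | h
    · exact lt_of_lt_of_le (hPsep p.1 hp.1 q.1 hq.1 h) (le_max_left _ _)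
    · exact lt_of_lt_of_le (hPsep p.2 hp.2 q.2 hq.2 h) (le_max_right _ _)
  have hcov : ∃ F : Finset (V × V), A₁ ×ˢ A₁ ⊆ ⋃ x ∈ F, closedBall x δ := by
    obtain ⟨F₀, -, -, hcovF⟩ := exists_net (hA.prod hA) hδ
    exact ⟨F₀, hcovF⟩
  have hle : (P ×ˢ P).card ≤ covN (A₁ ×ˢ A₁) δ := sep_card_le_covN hδ hsub hsep2 hcov
  calc covN A₁ δ ^ 2 ≤ (5 ^ finrank ℝ V * P.card) ^ 2 := Nat.pow_le_pow_left hPN 2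
    _ = 5 ^ (2 * finrank ℝ V) * (P ×ˢ P).card := by rw [Finset.card_product]; ring
    _ ≤ 5 ^ (2 * finrank ℝ V) * covN (A₁ ×ˢ A₁) δ := Nat.mul_le_mul_left _ hle

/-- Glue lemma translating the ℕ inequality to the real statement with an explicit constant. -/
lemma glue {N E M k e b : ℕ} (h : N ^ k ≤ 5 ^ e * E * M) (heb : e ≤ b) :
    ((5 : ℝ) ^ b)⁻¹ * ((N : ℝ) ^ k / (E : ℝ)) ≤ (M : ℝ) := by
  rcases Nat.eq_zero_or_pos E with hE | hE
  · simp [hE]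
  · have hEpos : (0 : ℝ) < E := by exact_mod_cast hE
    have h' : (N : ℝ) ^ k ≤ 5 ^ e * E * M := by exact_mod_cast h
    have h5 : (5 : ℝ) ^ e ≤ 5 ^ b := pow_le_pow_right₀ (by norm_num) heb
    have hb : (0 : ℝ) < (5 : ℝ) ^ b * E := by positivity
    rw [show ((5 : ℝ) ^ b)⁻¹ * ((N : ℝ) ^ k / (E : ℝ)) = (N : ℝ) ^ k / ((5 : ℝ) ^ b * E) by ring,
      div_le_iff₀ hb]
    have hMnn : (0 : ℝ) ≤ M := Nat.cast_nonneg M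
    nlinarith [h', mul_le_mul_of_nonneg_right (mul_le_mul_of_nonneg_right h5 hEpos.le) hMnn]

/-- energy bounds covering numbers of images. With
`E_δ(φ, A) = N({(a,a') ∈ A×A : ‖φ(a) − φ(a')‖ ≤ δ}, δ)`, one has
`N(φ(A), δ) ≥ c · N(A, δ)² / E_δ(φ, A)` with `c` depending only on the dimensions; in
particular, for `A = A₁ × A₁` and `φ(x,y) = x + f y`,
`N(A₁ + f A₁, δ) ≥ c · N(A₁, δ)⁴ / E_δ(φ, A₁ × A₁)`. -/
theorem covN_image_ge_sq_div_energy (n₁ n₂ n₃ : ℕ) :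
    ∃ c : ℝ, 0 < c ∧
      (∀ (V V' W : Type)
          [NormedAddCommGroup V] [NormedSpace ℝ V] [FiniteDimensional ℝ V]
          [NormedAddCommGroup V'] [NormedSpace ℝ V'] [FiniteDimensional ℝ V']
          [NormedAddCommGroup W] [NormedSpace ℝ W] [FiniteDimensional ℝ W],
        Module.finrank ℝ V = n₁ → Module.finrank ℝ V' = n₂ → Module.finrank ℝ W = n₃ →
        ∀ (φ : V × V' → W) (A : Set (V × V')) (δ : ℝ), 0 < δ →
          Bornology.IsBounded A → Bornology.IsBounded (φ '' A) →
          c * ((covN A δ : ℝ) ^ 2 /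
              (covN {p : (V × V') × (V × V') |
                  p.1 ∈ A ∧ p.2 ∈ A ∧ dist (φ p.1) (φ p.2) ≤ δ} δ : ℝ)) ≤
            (covN (φ '' A) δ : ℝ)) ∧
      (∀ (V : Type) [NormedAddCommGroup V] [NormedSpace ℝ V] [FiniteDimensional ℝ V],
        Module.finrank ℝ V = n₁ →
        ∀ (f : V →ₗ[ℝ] V) (A₁ : Set V) (δ : ℝ), 0 < δ → Bornology.IsBounded A₁ →
          c * ((covN A₁ δ : ℝ) ^ 4 /
              (covN {p : (V × V) × (V × V) |
                  p.1 ∈ A₁ ×ˢ A₁ ∧ p.2 ∈ A₁ ×ˢ A₁ ∧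
                  dist (p.1.1 + f p.1.2) (p.2.1 + f p.2.2) ≤ δ} δ : ℝ)) ≤
            (covN (Set.image2 (fun x y => x + f y) A₁ A₁) δ : ℝ)) := by
  refine ⟨((5 : ℝ) ^ (2 * (n₁ + n₂) + n₃ + 9 * n₁))⁻¹, by positivity, ?_, ?_⟩
  · intro V V' W _ _ _ _ _ _ _ _ _ h1 h2 h3 φ A δ hδ hA hφA
    have hmain := main_energy φ A hδ hA hφA
    rw [finrank_prod, h1, h2, h3] at hmain
    exact glue hmain (by omega)
  · intro V _ _ _ h1 f A₁ δ hδ hA₁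
    have hbdd : IsBounded ((fun p : V × V => p.1 + f p.2) '' (A₁ ×ˢ A₁)) := by
      set L : V × V →L[ℝ] V :=
        ContinuousLinearMap.fst ℝ V V +
          (LinearMap.toContinuousLinearMap f).comp (ContinuousLinearMap.snd ℝ V V) with hL
      have hφL : (fun p : V × V => p.1 + f p.2) = ⇑L := by
        funext p
        simp [hL]
      rw [hφL]
      exact L.lipschitz.isBounded_image (hA₁.prod hA₁)
    have hmain := main_energy (fun p : V × V => p.1 + f p.2) (A₁ ×ˢ A₁) hδ
      (hA₁.prod hA₁) hbdd
    have hsq := covN_sq_le_prod hA₁ hδ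
    rw [h1] at hsq
    have h4 : covN A₁ δ ^ 4 ≤ 5 ^ (9 * n₁) *
        covN {p : (V × V) × (V × V) |
          p.1 ∈ A₁ ×ˢ A₁ ∧ p.2 ∈ A₁ ×ˢ A₁ ∧
            dist (p.1.1 + f p.1.2) (p.2.1 + f p.2.2) ≤ δ} δ *
        covN ((fun p : V × V => p.1 + f p.2) '' (A₁ ×ˢ A₁)) δ := by
      have heq : (2 * finrank ℝ (V × V) + finrank ℝ V) = 5 * n₁ := by
        rw [finrank_prod, h1]; ring
      rw [heq] at hmain
      calc covN A₁ δ ^ 4 = (covN A₁ δ ^ 2) ^ 2 := by ring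
        _ ≤ (5 ^ (2 * n₁) * covN (A₁ ×ˢ A₁) δ) ^ 2 := Nat.pow_le_pow_left hsq 2
        _ = 5 ^ (4 * n₁) * covN (A₁ ×ˢ A₁) δ ^ 2 := by ring
        _ ≤ 5 ^ (4 * n₁) * (5 ^ (5 * n₁) *
            covN {p : (V × V) × (V × V) |
              p.1 ∈ A₁ ×ˢ A₁ ∧ p.2 ∈ A₁ ×ˢ A₁ ∧
                dist (p.1.1 + f p.1.2) (p.2.1 + f p.2.2) ≤ δ} δ *
            covN ((fun p : V × V => p.1 + f p.2) '' (A₁ ×ˢ A₁)) δ) :=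
            Nat.mul_le_mul_left _ hmain
        _ = _ := by ring
    have himg : (fun p : V × V => p.1 + f p.2) '' (A₁ ×ˢ A₁) =
        Set.image2 (fun x y => x + f y) A₁ A₁ := Set.image_prod fun x y => x + f y
    rw [← himg]
    exact glue h4 (by omega)
end
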